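/- arXiv:1505.05675 — 2 statements merged into one kernel-verified Lean document; each statement's English description precedes it below -/
import Mathlib

section
/- Let X be the hyperbolic approximation of the Euclidean real line with parameter r = 1/6 and with A_k = {m·r^k : m ∈ ℤ} for each k ∈ ℤ, all edges of length 1. For n ∈ ℕ let v_0, …, v_{6^n} be the level-0 vertices with B(v_i) = B(i, 2), let v'_k, v''_k (for 0 < k < n) be the level-(−k) vertices with B(v'_k) = B(6^k, 2·6^k) and B(v''_k) = B(6^n − 6^k, 2·6^k), and let γ be the path from v_0 to v_{6^n} consisting of the radial geodesic from v_0 through v'_1, …, up to v'_{n−1}, the horizontal edge v'_{n−1} v''_{n−1}, and the radial geodesic from v''_{n−1} down through v''_1 to v_{6^n}. Then γ is a geodesic in X; in particular d(v_0, v_{6^n}) = L(γ) = 2n − 1. -/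
open SimpleGraph

namespace Chordality

variable {V : Type*} {G : SimpleGraph V}

/-- The length of a walk in a graph whose edge `e` has length `ℓ e`. -/
noncomputable def wlen (ℓ : Sym2 V → ℝ) {u v : V} (w : G.Walk u v) : ℝ :=
  (w.edges.map ℓ).sum

/-- The path metric of a metric graph: the infimum of the lengths of walks joining
two vertices. -/
noncomputable def gdist (G : SimpleGraph V) (ℓ : Sym2 V → ℝ) (u v : V) : ℝ :=
  sInf {x : ℝ | ∃ w : G.Walk u v, wlen ℓ w = x}

/-- A walk is geodesic if its length realizes the path metric between its endpoints. -/
def IsGeodesicWalk (ℓ : Sym2 V → ℝ) {u v : V} (w : G.Walk u v) : Prop :=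
  wlen ℓ w = gdist G ℓ u v

/-- `G`, with edge lengths `ℓ`, is a metric graph: connected, locally finite,
with positive edge lengths. -/
def IsMetricGraph (G : SimpleGraph V) (ℓ : Sym2 V → ℝ) : Prop :=
  G.Connected ∧ (∀ e ∈ G.edgeSet, 0 < ℓ e) ∧ ∀ v : V, (G.neighborSet v).Finite

/-- A walk lies inside the closed walk `c`. -/
def WalkIn {z u v : V} (c : G.Walk z z) (w : G.Walk u v) : Prop :=
  (∀ e ∈ w.edges, e ∈ c.edges) ∧ ∀ a ∈ w.support, a ∈ c.support

/-- The length metric `d_C` of a cycle `c`, evaluated on vertices of `c`: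
the infimum of lengths of walks joining `u` and `v` inside `c`. -/
noncomputable def cdist (ℓ : Sym2 V → ℝ) {z : V} (c : G.Walk z z) (u v : V) : ℝ :=
  sInf {x : ℝ | ∃ w : G.Walk u v, WalkIn c w ∧ wlen ℓ w = x}

/-- `σ` is a shortcut of the cycle `c`: a path joining two vertices `p, q` of `c`
with `L(σ) < d_C(p, q)`. -/
def IsShortcut (ℓ : Sym2 V → ℝ) {z p q : V} (c : G.Walk z z) (σ : G.Walk p q) : Prop :=
  σ.IsPath ∧ p ∈ c.support ∧ q ∈ c.support ∧ wlen ℓ σ < cdist ℓ c p q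

/-- `σ` is a strict shortcut of `c`: a shortcut meeting `c` only at its endpoints. -/
def IsStrictShortcut (ℓ : Sym2 V → ℝ) {z p q : V} (c : G.Walk z z) (σ : G.Walk p q) : Prop :=
  IsShortcut ℓ c σ ∧ ∀ a ∈ σ.support, a ∈ c.support → a = p ∨ a = q

/-- `v` is a shortcut vertex of `c`, i.e. an endpoint of some strict shortcut of `c`. -/
def ShortcutVertex (ℓ : Sym2 V → ℝ) {z : V} (c : G.Walk z z) (v : V) : Prop :=
  ∃ (p q : V) (σ : G.Walk p q), IsStrictShortcut ℓ c σ ∧ (v = p ∨ v = q)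

/-- `v` is a shortcut vertex of `c` associated to a strict shortcut of length at most `m`. -/
def ShortcutVertexLe (ℓ : Sym2 V → ℝ) {z : V} (c : G.Walk z z) (m : ℝ) (v : V) : Prop :=
  ∃ (p q : V) (σ : G.Walk p q),
    IsStrictShortcut ℓ c σ ∧ wlen ℓ σ ≤ m ∧ (v = p ∨ v = q)

/-- `(k,m)`-edge-chordal: every cycle of length at least `k` has a shortcut consisting of
a single edge of length at most `m`. -/
def EdgeChordal (G : SimpleGraph V) (ℓ : Sym2 V → ℝ) (k m : ℝ) : Prop :=
  ∀ (z : V) (c : G.Walk z z), c.IsCycle → k ≤ wlen ℓ c →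
    ∃ (p q : V) (h : G.Adj p q),
      IsShortcut ℓ c (Walk.cons h Walk.nil) ∧ ℓ s(p, q) ≤ m

/-- `k`-path-chordal: every cycle of length at least `k` admits a shortcut. -/
def PathChordal (G : SimpleGraph V) (ℓ : Sym2 V → ℝ) (k : ℝ) : Prop :=
  ∀ (z : V) (c : G.Walk z z), c.IsCycle → k ≤ wlen ℓ c →
    ∃ (p q : V) (σ : G.Walk p q), IsShortcut ℓ c σ

/-- `(k,m)`-path-chordal: every cycle of length at least `k` admits a shortcut of length
at most `m`. -/
def PathChordalLe (G : SimpleGraph V) (ℓ : Sym2 V → ℝ) (k m : ℝ) : Prop :=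
  ∀ (z : V) (c : G.Walk z z), c.IsCycle → k ≤ wlen ℓ c →
    ∃ (p q : V) (σ : G.Walk p q), IsShortcut ℓ c σ ∧ wlen ℓ σ ≤ m

/-- `ε`-densely `(k,m)`-path-chordal: on every cycle of length at least `k`, the vertices
that are shortcut vertices of strict shortcuts of length at most `m` form an `ε`-dense
subset of `(C, d_C)`. -/
def DenselyPathChordal (G : SimpleGraph V) (ℓ : Sym2 V → ℝ) (ε k m : ℝ) : Prop :=
  ∀ (z : V) (c : G.Walk z z), c.IsCycle → k ≤ wlen ℓ c →
    ∀ x ∈ c.support, ∃ v, ShortcutVertexLe ℓ c m v ∧ cdist ℓ c v x < ε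

/-- `ε`-densely `k`-path-chordal: on every cycle of length at least `k`, the shortcut
vertices (of strict shortcuts, with no bound on their lengths) form an `ε`-dense subset
of `(C, d_C)`. -/
def DenselyKPathChordal (G : SimpleGraph V) (ℓ : Sym2 V → ℝ) (ε k : ℝ) : Prop :=
  ∀ (z : V) (c : G.Walk z z), c.IsCycle → k ≤ wlen ℓ c →
    ∀ x ∈ c.support, ∃ v, ShortcutVertex ℓ c v ∧ cdist ℓ c v x < ε

/-- The geodesic triangle with sides `g1, g2, g3` is `δ`-thin: each side is contained in
the `δ`-neighborhood of the union of the other two sides. -/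
def ThinTriangle (ℓ : Sym2 V → ℝ) (δ : ℝ) {x y z : V}
    (g1 : G.Walk x y) (g2 : G.Walk y z) (g3 : G.Walk z x) : Prop :=
  (∀ p ∈ g1.support, ∃ q, (q ∈ g2.support ∨ q ∈ g3.support) ∧ gdist G ℓ p q ≤ δ) ∧
  (∀ p ∈ g2.support, ∃ q, (q ∈ g3.support ∨ q ∈ g1.support) ∧ gdist G ℓ p q ≤ δ) ∧
  (∀ p ∈ g3.support, ∃ q, (q ∈ g1.support ∨ q ∈ g2.support) ∧ gdist G ℓ p q ≤ δ)

/-- `G` is `δ`-hyperbolic: every geodesic triangle is `δ`-thin. -/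
def Hyperbolic (G : SimpleGraph V) (ℓ : Sym2 V → ℝ) (δ : ℝ) : Prop :=
  ∀ (x y z : V) (g1 : G.Walk x y) (g2 : G.Walk y z) (g3 : G.Walk z x),
    IsGeodesicWalk ℓ g1 → IsGeodesicWalk ℓ g2 → IsGeodesicWalk ℓ g3 →
    ThinTriangle ℓ δ g1 g2 g3

/-- The sharp hyperbolicity constant `δ(G)`. -/
noncomputable def hypConst (G : SimpleGraph V) (ℓ : Sym2 V → ℝ) : ℝ :=
  sInf {δ : ℝ | 0 ≤ δ ∧ Hyperbolic G ℓ δ}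

/-- A walk lies inside the geodesic triangle with sides `g1, g2, g3`. -/
def WalkInTri {x y z u v : V} (g1 : G.Walk x y) (g2 : G.Walk y z) (g3 : G.Walk z x)
    (w : G.Walk u v) : Prop :=
  (∀ e ∈ w.edges, e ∈ g1.edges ∨ e ∈ g2.edges ∨ e ∈ g3.edges) ∧
  ∀ a ∈ w.support, a ∈ g1.support ∨ a ∈ g2.support ∨ a ∈ g3.support

/-- The length metric `d_T` of the geodesic triangle with sides `g1, g2, g3`,
evaluated on vertices of the triangle. -/
noncomputable def tdist (ℓ : Sym2 V → ℝ) {x y z : V} (g1 : G.Walk x y) (g2 : G.Walk y z)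
    (g3 : G.Walk z x) (u v : V) : ℝ :=
  sInf {r : ℝ | ∃ w : G.Walk u v, WalkInTri g1 g2 g3 w ∧ wlen ℓ w = r}

/-- `σ` is a shortcut of the geodesic triangle with sides `g1, g2, g3`: a path joining
two vertices `p, q` of the triangle with `L(σ) < d_T(p, q)`. -/
def IsTriShortcut (ℓ : Sym2 V → ℝ) {x y z p q : V} (g1 : G.Walk x y) (g2 : G.Walk y z)
    (g3 : G.Walk z x) (σ : G.Walk p q) : Prop :=
  σ.IsPath ∧ (p ∈ g1.support ∨ p ∈ g2.support ∨ p ∈ g3.support) ∧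
    (q ∈ g1.support ∨ q ∈ g2.support ∨ q ∈ g3.support) ∧
    wlen ℓ σ < tdist ℓ g1 g2 g3 p q

/-- `v` is a shortcut vertex of the triangle, associated to a shortcut of length
at most `m`. -/
def TriShortcutVertexLe (ℓ : Sym2 V → ℝ) {x y z : V} (g1 : G.Walk x y) (g2 : G.Walk y z)
    (g3 : G.Walk z x) (m : ℝ) (v : V) : Prop :=
  ∃ (p q : V) (σ : G.Walk p q),
    IsTriShortcut ℓ g1 g2 g3 σ ∧ wlen ℓ σ ≤ m ∧ (v = p ∨ v = q)

/-- `ε`-densely `(k,m)`-path-chordal on the triangles: for every geodesic triangle of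
total length at least `k`, the shortcut vertices of shortcuts of length at most `m`
form an `ε`-dense subset of `(T, d_T)`. -/
def DenselyPathChordalOnTriangles (G : SimpleGraph V) (ℓ : Sym2 V → ℝ) (ε k m : ℝ) : Prop :=
  ∀ (x y z : V) (g1 : G.Walk x y) (g2 : G.Walk y z) (g3 : G.Walk z x),
    IsGeodesicWalk ℓ g1 → IsGeodesicWalk ℓ g2 → IsGeodesicWalk ℓ g3 →
    k ≤ wlen ℓ g1 + wlen ℓ g2 + wlen ℓ g3 →
    ∀ p, (p ∈ g1.support ∨ p ∈ g2.support ∨ p ∈ g3.support) →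
      ∃ v, TriShortcutVertexLe ℓ g1 g2 g3 m v ∧ tdist ℓ g1 g2 g3 v p < ε

end Chordality

namespace Chordality

/-- The center in `ℝ` of the ball corresponding to the vertex `(k, m)` of the hyperbolic
approximation of `ℝ` with parameter `r = 1/6` and `A_k = {m · r^k : m ∈ ℤ}`:
the vertex `(k, m)` corresponds to the ball `B(m · 6⁻ᵏ, 2 · 6⁻ᵏ)`. -/
noncomputable def hcenter (v : ℤ × ℤ) : ℝ := (v.2 : ℝ) * (6 : ℝ) ^ (-v.1)

/-- The radius of the ball corresponding to the vertex `(k, m)`. -/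
noncomputable def hradius (v : ℤ × ℤ) : ℝ := 2 * (6 : ℝ) ^ (-v.1)

/-- The hyperbolic approximation of the Euclidean real line with parameter `r = 1/6` and
`A_k = {m · r^k : m ∈ ℤ}`: vertices of level `k` are the balls `B(m · 6⁻ᵏ, 2 · 6⁻ᵏ)`;
two vertices are adjacent iff they lie on the same level and their closed balls
intersect (a horizontal edge), or they lie on neighboring levels and the ball of the
upper level is contained in the ball of the lower level (a radial edge). -/
noncomputable def hyperApprox : SimpleGraph (ℤ × ℤ) :=
  SimpleGraph.fromRel fun u v =>
    (u.1 = v.1 ∧ |hcenter u - hcenter v| ≤ hradius u + hradius v) ∨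
    (v.1 = u.1 + 1 ∧ Metric.ball (hcenter v) (hradius v) ⊆ Metric.ball (hcenter u) (hradius u))

end Chordality

namespace Chordality

lemma ball_sub {c c' r r' : ℝ} (hr : 0 < r) (h : Metric.ball c r ⊆ Metric.ball c' r') :
    |c - c'| + r ≤ r' := by
  refine le_of_forall_pos_le_add fun ε hε => ?_
  set m := min ε r with hm
  have hm0 : 0 < m := lt_min hε hr
  have hmr : m ≤ r := min_le_right ε r
  have hme : m ≤ ε := min_le_left ε r
  have h1 : c + (r - m) ∈ Metric.ball c r := by
    rw [Metric.mem_ball, Real.dist_eq, show c + (r - m) - c = r - m by ring,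
      abs_of_nonneg (by linarith)]
    linarith
  have h2 : c - (r - m) ∈ Metric.ball c r := by
    rw [Metric.mem_ball, Real.dist_eq, show c - (r - m) - c = -(r - m) by ring,
      abs_neg, abs_of_nonneg (by linarith)]
    linarith
  have l1 := h h1
  have l2 := h h2
  rw [Metric.mem_ball, Real.dist_eq] at l1 l2
  obtain ⟨a1, b1⟩ := abs_lt.mp l1
  obtain ⟨a2, b2⟩ := abs_lt.mp l2
  rcases abs_cases (c - c') with ⟨e, _⟩ | ⟨e, _⟩ <;> linarith

lemma zp6 (m : ℤ) : (6:ℝ) ^ (m + 1) = 6 * (6:ℝ) ^ m := by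
  rw [zpow_add_one₀ (by norm_num : (6:ℝ) ≠ 0)]; ring

lemma zp6pos (m : ℤ) : (0:ℝ) < (6:ℝ) ^ m := zpow_pos (by norm_num) m

lemma zp6le {m M : ℤ} (h : m ≤ M) : (6:ℝ) ^ m ≤ (6:ℝ) ^ M :=
  zpow_le_zpow_right₀ (by norm_num) h

lemma hradius_pos (v : ℤ × ℤ) : 0 < hradius v := by
  have := zp6pos (-v.1); rw [hradius]; linarith

lemma adj_cases {u v : ℤ × ℤ} (h : hyperApprox.Adj u v) :
    (u.1 = v.1 ∧ |hcenter u - hcenter v| ≤ hradius u + hradius v) ∨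
    (v.1 = u.1 + 1 ∧ |hcenter u - hcenter v| + hradius v ≤ hradius u) ∨
    (u.1 = v.1 + 1 ∧ |hcenter u - hcenter v| + hradius u ≤ hradius v) := by
  rw [hyperApprox, SimpleGraph.fromRel_adj] at h
  obtain ⟨-, h | h⟩ := h
  · rcases h with ⟨h1, h2⟩ | ⟨h1, h2⟩
    · exact Or.inl ⟨h1, h2⟩
    · refine Or.inr (Or.inl ⟨h1, ?_⟩)
      have := ball_sub (hradius_pos v) h2
      rwa [abs_sub_comm] at this
  · rcases h with ⟨h1, h2⟩ | ⟨h1, h2⟩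
    · refine Or.inl ⟨h1.symm, ?_⟩
      rw [abs_sub_comm]; linarith
    · exact Or.inr (Or.inr ⟨h1, ball_sub (hradius_pos u) h2⟩)


lemma key : ∀ {u v : ℤ × ℤ} (w : hyperApprox.Walk u v),
    ∃ M : ℤ, -u.1 ≤ M ∧ -v.1 ≤ M ∧ 2 * M ≤ (w.length : ℤ) - u.1 - v.1 ∧
      |hcenter u - hcenter v| ≤
        4 * (6:ℝ) ^ M * ((w.length : ℝ) - 2 * (M : ℝ) - (u.1 : ℝ) - (v.1 : ℝ) + 1)
          - 2 * (6:ℝ) ^ (-u.1) - 2 * (6:ℝ) ^ (-v.1)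
  | u, _, .nil => by
    refine ⟨-u.1, le_refl _, le_refl _, by simp; omega, ?_⟩
    simp only [Walk.length_nil, sub_self, abs_zero, Nat.cast_zero]
    push_cast
    ring_nf
    exact le_refl 0
  | u, v, .cons (v := b) h p => by
    obtain ⟨M, hM1, hM2, hM3, hM4⟩ := key p
    have tri : |hcenter u - hcenter v| ≤ |hcenter u - hcenter b| + |hcenter b - hcenter v| :=
      abs_sub_le _ _ _
    have hL : ((Walk.cons h p).length : ℤ) = (p.length : ℤ) + 1 := by
      rw [Walk.length_cons]; push_cast; ring
    have hLr : ((Walk.cons h p).length : ℝ) = (p.length : ℝ) + 1 := by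
      rw [Walk.length_cons]; push_cast; ring
    rcases adj_cases h with ⟨e, hc⟩ | ⟨e, hc⟩ | ⟨e, hc⟩
    · -- horizontal
      refine ⟨M, by omega, hM2, by rw [hL]; omega, ?_⟩
      rw [hLr]
      have hbr : (b.1 : ℝ) = (u.1 : ℝ) := by exact_mod_cast e.symm
      have hYX : (6:ℝ) ^ (-b.1) = (6:ℝ) ^ (-u.1) := by rw [show (-b.1 : ℤ) = -u.1 by omega]
      rw [hbr, hYX] at hM4
      have hXP : (6:ℝ) ^ (-u.1) ≤ (6:ℝ) ^ M := zp6le (by omega)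
      have hcu : |hcenter u - hcenter b| ≤ 4 * (6:ℝ) ^ (-u.1) := by
        rw [hradius, hradius, hYX] at hc; linarith
      nlinarith [tri, hM4, hcu, hXP]
    · -- up : b.1 = u.1 + 1, smaller ball
      have hbr : (b.1 : ℝ) = (u.1 : ℝ) + 1 := by exact_mod_cast e
      have hXY : (6:ℝ) ^ (-u.1) = 6 * (6:ℝ) ^ (-b.1) := by
        rw [show (-u.1 : ℤ) = -b.1 + 1 by omega, zp6]
      have hcu : |hcenter u - hcenter b| + 2 * (6:ℝ) ^ (-b.1) ≤ 2 * (6:ℝ) ^ (-u.1) := by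
        rw [hradius, hradius] at hc; linarith
      rcases le_or_gt (-u.1) M with hMu | hMu
      · refine ⟨M, hMu, hM2, by rw [hL]; omega, ?_⟩
        rw [hLr]
        rw [hbr] at hM4
        have hXP : (6:ℝ) ^ (-u.1) ≤ (6:ℝ) ^ M := zp6le hMu
        nlinarith [tri, hM4, hcu, hXP, hXY, (zp6pos (-b.1)).le]
      · -- M = -b.1
        have hMeq : M = -b.1 := by omega
        have hPY : (6:ℝ) ^ M = (6:ℝ) ^ (-b.1) := by rw [hMeq]
        have hMr : (M : ℝ) = -(b.1 : ℝ) := by exact_mod_cast hMeq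
        refine ⟨-u.1, le_refl _, by omega, by rw [hL]; omega, ?_⟩
        have hX0 : (0:ℤ) ≤ (p.length : ℤ) + 1 + u.1 - v.1 := by omega
        have hXr : (0:ℝ) ≤ (p.length : ℝ) + 1 + (u.1 : ℝ) - (v.1 : ℝ) := by exact_mod_cast hX0
        rw [hPY, hMr, hbr] at hM4
        rw [hLr]
        have hY0 : (0:ℝ) ≤ (6:ℝ) ^ (-b.1) := (zp6pos _).le
        push_cast
        nlinarith [tri, hM4, hcu, hXY, mul_nonneg hY0 hXr]
    · -- down : u.1 = b.1 + 1, b is bigger ball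
      have hbr : (b.1 : ℝ) = (u.1 : ℝ) - 1 := by
        have h2 : (u.1 : ℝ) = (b.1 : ℝ) + 1 := by exact_mod_cast e
        linarith
      have hYX : (6:ℝ) ^ (-b.1) = 6 * (6:ℝ) ^ (-u.1) := by
        rw [show (-b.1 : ℤ) = -u.1 + 1 by omega, zp6]
      have hcu : |hcenter u - hcenter b| + 2 * (6:ℝ) ^ (-u.1) ≤ 2 * (6:ℝ) ^ (-b.1) := by
        rw [hradius, hradius] at hc; linarith
      refine ⟨M, by omega, hM2, by rw [hL]; omega, ?_⟩
      rw [hLr]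
      rw [hbr] at hM4
      nlinarith [tri, hM4, hcu, hYX]


lemma pow_bound : ∀ t : ℕ, 8 * t + 4 ≤ 6 ^ (t + 1)
  | 0 => by norm_num
  | (t+1) => by
    have ih := pow_bound t
    have h6 : 6 ≤ 6 ^ (t+1) := Nat.le_self_pow (by omega) 6
    calc 8 * (t+1) + 4 = (8 * t + 4) + 8 := by ring
      _ ≤ 6 ^ (t+1) + 8 := by omega
      _ ≤ 6 ^ (t+1) + 5 * 6 ^ (t+1) := by linarith
      _ = 6 ^ (t+2) := by ring

lemma real_pow_bound {s : ℤ} (hs : 1 ≤ s) : 4 * (2 * (s:ℝ) - 1) ≤ (6:ℝ) ^ s := by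
  obtain ⟨t, rfl⟩ : ∃ t : ℕ, s = (t : ℤ) + 1 := ⟨(s-1).toNat, by omega⟩
  have h := pow_bound t
  have hr : ((8 * t + 4 : ℕ) : ℝ) ≤ ((6 ^ (t+1) : ℕ) : ℝ) := by exact_mod_cast h
  push_cast at hr
  rw [show ((t:ℤ) + 1) = ((t + 1 : ℕ) : ℤ) by push_cast; ring, zpow_natCast]
  push_cast
  linarith

/-- Any walk from `(0,0)` to `(0, 6^n)` has length at least `2n - 1`. -/
lemma walk_length_lb (n : ℕ) (hn : 2 ≤ n)
    (w : hyperApprox.Walk ((0:ℤ), (0:ℤ)) ((0:ℤ), (6:ℤ)^n)) :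
    2 * n - 1 ≤ w.length := by
  obtain ⟨M, hM1, hM2, hM3, hM4⟩ := key w
  simp only at hM1 hM2 hM3 hM4
  norm_num at hM1 hM2 hM3 hM4
  have hcA : hcenter ((0:ℤ), (0:ℤ)) = 0 := by simp [hcenter]
  have hcB : hcenter ((0:ℤ), (6:ℤ)^n) = (6:ℝ)^n := by
    simp [hcenter]
  rw [hcA, hcB, abs_sub_comm, sub_zero, abs_of_nonneg (by positivity)] at hM4
  by_contra hcon
  push_neg at hcon
  have hL : (w.length : ℤ) ≤ 2 * n - 2 := by omega
  have hMn : M ≤ (n:ℤ) - 1 := by omega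
  set s : ℤ := (n:ℤ) - M with hsdef
  have hs1 : 1 ≤ s := by omega
  have hpb := real_pow_bound hs1
  have hP : (0:ℝ) < (6:ℝ)^M := zp6pos M
  have hcoef : (w.length : ℝ) - 2 * (M:ℝ) + 1 ≤ 2 * (s:ℝ) - 1 := by
    have h1 : (w.length : ℝ) ≤ 2 * (n:ℝ) - 2 := by exact_mod_cast hL
    have h2 : (s:ℝ) = (n:ℝ) - (M:ℝ) := by push_cast [hsdef]; ring
    linarith
  have hmul : 4 * (6:ℝ)^M * ((w.length : ℝ) - 2 * (M:ℝ) + 1)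
      ≤ (6:ℝ)^M * (4 * (2 * (s:ℝ) - 1)) := by nlinarith
  have hpow : (6:ℝ)^M * (6:ℝ)^s = (6:ℝ)^(n:ℕ) := by
    rw [← zpow_add₀ (by norm_num : (6:ℝ) ≠ 0), show M + s = (n:ℤ) by omega, zpow_natCast]
  have h6n : (6:ℝ)^M * (4 * (2 * (s:ℝ) - 1)) ≤ (6:ℝ)^(n:ℕ) := by
    rw [← hpow]
    nlinarith
  linarith [hM4, hmul, h6n]

lemma adj_of_sub {u v : ℤ × ℤ} (hne : u ≠ v) (hlev : u.1 = v.1 + 1)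
    (h : hradius u + |hcenter u - hcenter v| ≤ hradius v) : hyperApprox.Adj u v := by
  rw [hyperApprox, SimpleGraph.fromRel_adj]
  refine ⟨hne, Or.inr (Or.inr ⟨hlev, Metric.ball_subset_ball' ?_⟩)⟩
  rw [Real.dist_eq]; exact h

lemma adj_of_sup {u v : ℤ × ℤ} (hne : u ≠ v) (hlev : v.1 = u.1 + 1)
    (h : hradius v + |hcenter v - hcenter u| ≤ hradius u) : hyperApprox.Adj u v :=
  (adj_of_sub (Ne.symm hne) hlev h).symm

lemma adj_horiz {u v : ℤ × ℤ} (hne : u ≠ v) (hlev : u.1 = v.1)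
    (h : |hcenter u - hcenter v| ≤ hradius u + hradius v) : hyperApprox.Adj u v := by
  rw [hyperApprox, SimpleGraph.fromRel_adj]
  exact ⟨hne, Or.inl (Or.inl ⟨hlev, h⟩)⟩


lemma pw6 (k : ℕ) : (6:ℝ) ^ (-(((k:ℤ)) + 1) * (-1)) = (6:ℝ) ^ (k+1 : ℕ) := by
  rw [show (-(((k:ℤ)) + 1) * (-1)) = (((k+1 : ℕ) : ℤ)) by push_cast; ring, zpow_natCast]

lemma zpow_eq_npow (k : ℕ) : (6:ℝ) ^ ((k:ℤ)) = (6:ℝ) ^ k := by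
  rw [zpow_natCast]

lemma hA1 : hyperApprox.Adj ((0:ℤ),(0:ℤ)) ((-1:ℤ),(1:ℤ)) := by
  apply adj_of_sub (by simp [Prod.ext_iff]) (by norm_num)
  simp only [hradius, hcenter]
  norm_num

lemma hA2 (j : ℕ) : hyperApprox.Adj ((-((j:ℤ) + 1), 1)) ((-((j:ℤ) + 2), 1)) := by
  apply adj_of_sub (by simp [Prod.ext_iff] <;> omega) (by show -((j:ℤ)+1) = -((j:ℤ)+2) + 1; ring)
  simp only [hradius, hcenter, neg_neg, Int.cast_one]
  have h1 : (6:ℝ) ^ ((j:ℤ) + 2) = 6 * (6:ℝ) ^ ((j:ℤ)+1) := by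
    rw [show ((j:ℤ)+2) = ((j:ℤ)+1)+1 by ring, zp6]
  rw [h1]
  set X := (6:ℝ) ^ ((j:ℤ)+1) with hX
  have hX0 : 0 < X := zp6pos _
  rw [show (1 * X - 1 * (6 * X)) = -(5 * X) by ring, abs_neg, abs_of_nonneg (by linarith)]
  linarith


lemma hgc (m i : ℕ) (hi : i ≤ m) :
    hcenter ((-(i + 1 : ℤ)), (6 : ℤ) ^ (m + 2 - (i + 1)) - 1)
      = (6:ℝ)^(m+2) - (6:ℝ)^(i+1) := by
  simp only [hcenter, neg_neg]
  rw [show ((i:ℤ)+1) = ((i+1 : ℕ) : ℤ) by push_cast; ring, zpow_natCast,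
    show (((6 : ℤ) ^ (m + 2 - (i + 1)) - 1 : ℤ) : ℝ) = (6:ℝ)^(m + 2 - (i+1)) - 1 by
      push_cast; ring]
  have h : (6:ℝ)^(m + 2 - (i+1)) * (6:ℝ)^(i+1) = (6:ℝ)^(m+2) := by
    rw [← pow_add]
    congr 1
    omega
  linear_combination h

lemma hrg (i : ℕ) (b : ℤ) : hradius ((-(i + 1 : ℤ)), b) = 2 * (6:ℝ)^(i+1 : ℕ) := by
  simp only [hradius, neg_neg]
  rw [show ((i:ℤ)+1) = ((i+1 : ℕ) : ℤ) by push_cast; ring, zpow_natCast]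

lemma hA4 (m i : ℕ) (hi : i + 1 ≤ m) :
    hyperApprox.Adj ((-(↑(i+1) + 1 : ℤ)), (6 : ℤ) ^ (m + 2 - ((i+1) + 1)) - 1)
      ((-(i + 1 : ℤ)), (6 : ℤ) ^ (m + 2 - (i + 1)) - 1) := by
  apply adj_of_sup (v := ((-(i + 1 : ℤ)), (6 : ℤ) ^ (m + 2 - (i + 1)) - 1))
  · simp [Prod.ext_iff] <;> omega
  · show -((i:ℤ) + 1) = -(↑(i+1) + 1) + 1
    push_cast; ring
  · rw [hgc m i (by omega), hgc m (i+1) (by omega), hrg, hrg]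
    set X := (6:ℝ)^(i+1 : ℕ) with hX
    have hX0 : 0 < X := by positivity
    have h2 : (6:ℝ)^(i+1+1 : ℕ) = 6 * X := by rw [pow_succ]; ring
    rw [h2, show ((6:ℝ)^(m+2) - X - ((6:ℝ)^(m+2) - 6 * X)) = 5 * X by ring,
      abs_of_nonneg (by linarith)]
    linarith

lemma hA3 (m : ℕ) :
    hyperApprox.Adj ((-(m + 1 : ℤ)), (1:ℤ)) ((-(m + 1 : ℤ)), (6 : ℤ) ^ (m + 2 - (m + 1)) - 1) := by
  apply adj_horiz
  · simp [Prod.ext_iff, show m + 2 - (m+1) = 1 by omega]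
  · rfl
  · rw [hgc m m (le_refl m), hrg, hrg]
    have e : hcenter ((-(m + 1 : ℤ)), (1:ℤ)) = (6:ℝ)^(m+1 : ℕ) := by
      simp only [hcenter, neg_neg, Int.cast_one]
      rw [show ((m:ℤ)+1) = ((m+1 : ℕ) : ℤ) by push_cast; ring, zpow_natCast]
      ring
    rw [e]
    set X := (6:ℝ)^(m+1 : ℕ) with hX
    have hX0 : 0 < X := by positivity
    have h2 : (6:ℝ)^(m+2 : ℕ) = 6 * X := by rw [show m + 2 = (m+1)+1 by omega, pow_succ]; ring
    rw [h2, show (X - (6 * X - X)) = -(4 * X) by ring, abs_neg, abs_of_nonneg (by linarith)]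
    linarith

lemma hA5 (m : ℕ) :
    hyperApprox.Adj ((-(0 + 1 : ℤ)), (6 : ℤ) ^ (m + 2 - (0 + 1)) - 1) ((0:ℤ), (6:ℤ)^(m+2)) := by
  apply adj_of_sup (v := ((0:ℤ), (6:ℤ)^(m+2)))
  · simp [Prod.ext_iff]
  · show (0:ℤ) = -(0 + 1 : ℤ) + 1; ring
  · have e0 : hcenter ((0:ℤ), (6:ℤ)^(m+2)) = (6:ℝ)^(m+2 : ℕ) := by
      simp [hcenter]
    have e1 : hradius ((0:ℤ), (6:ℤ)^(m+2)) = 2 := by simp [hradius]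
    have e2 := hgc m 0 (by omega)
    have e3 : hradius ((-1:ℤ), (6:ℤ)^(m+1) - 1) = 12 := by
      simp [hradius]
      norm_num
    norm_num at e2 ⊢
    rw [e0, e1] at *
    rw [e2, e3]
    norm_num


/-- Build a walk from a list of intermediate vertices. -/
def listWalk (G : SimpleGraph V) : (l : List V) → (u v : V) →
    List.Chain G.Adj u (l ++ [v]) → G.Walk u v
  | [], _, _, h => Walk.cons (List.isChain_cons_cons.mp h).1 Walk.nil
  | a :: l, _, v, h =>
    Walk.cons (List.chain_cons.mp h).1 (listWalk G l a v (List.chain_cons.mp h).2)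

lemma listWalk_support (G : SimpleGraph V) : ∀ (l : List V) (u v : V)
    (h : List.Chain G.Adj u (l ++ [v])),
    (listWalk G l u v h).support = u :: (l ++ [v])
  | [], u, v, h => by simp [listWalk]
  | a :: l, u, v, h => by simp [listWalk]; exact listWalk_support G l a v _

lemma listWalk_length (G : SimpleGraph V) : ∀ (l : List V) (u v : V)
    (h : List.Chain G.Adj u (l ++ [v])),
    (listWalk G l u v h).length = l.length + 1
  | [], u, v, h => by simp [listWalk]
  | a :: l, u, v, h => by simp [listWalk]; exact listWalk_length G l a v _

lemma chain'_mapRange {α : Type*} {R : α → α → Prop} :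
    ∀ (N : ℕ) (F : ℕ → α), (∀ i, i + 1 < N → R (F i) (F (i + 1))) →
      List.Chain' R ((List.range N).map F)
  | 0, _, _ => by simp; exact List.isChain_nil
  | (N+1), F, h => by
    rw [List.range_succ, List.map_append]
    refine List.IsChain.append (chain'_mapRange N F fun i hi => h i (by omega)) (by simp) ?_
    intro x hx y hy
    simp at hy
    subst hy
    match N, hx with
    | (N+1), hx =>
      simp [List.range_succ] at hx
      rw [← hx]
      exact h N (by omega)


lemma hA2' {a b : ℤ} (hb : b = a + 1) : hyperApprox.Adj ((-a, 1)) ((-b, 1)) := by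
  apply adj_of_sub (by simp [Prod.ext_iff]; omega) (by show -a = -b + 1; omega)
  simp only [hradius, hcenter, neg_neg, Int.cast_one]
  have h1 : (6:ℝ) ^ b = 6 * (6:ℝ) ^ a := by rw [hb, zp6]
  rw [h1]
  set X := (6:ℝ) ^ a with hX
  have hX0 : 0 < X := zp6pos _
  rw [show (1 * X - 1 * (6 * X)) = -(5 * X) by ring, abs_neg, abs_of_nonneg (by linarith)]
  linarith


/-- In the hyperbolic approximation `X` of the Euclidean line (parameter
`r = 1/6`, all edges of length `1`), for `n ≥ 2`, the path `γ` from `v_0 = (0,0)` to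
`v_{6^n} = (0, 6^n)` consisting of the radial geodesic `v_0, v'_1, …, v'_{n-1}` (where
`v'_k = (-k, 1)` is the level `-k` vertex with ball `B(6^k, 2 · 6^k)`), the horizontal
edge `v'_{n-1} v''_{n-1}`, and the radial geodesic `v''_{n-1}, …, v''_1, v_{6^n}` (where
`v''_k = (-k, 6^(n-k) - 1)` has ball `B(6^n - 6^k, 2 · 6^k)`) is a geodesic; in
particular `d(v_0, v_{6^n}) = L(γ) = 2n - 1`. -/
theorem hyperApprox_geodesic (n : ℕ) (hn : 2 ≤ n) :
    ∃ γ : hyperApprox.Walk ((0 : ℤ), (0 : ℤ)) ((0 : ℤ), (6 : ℤ) ^ n),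
      γ.support =
        ((((0 : ℤ), (0 : ℤ)) ::
          (List.range (n - 1)).map (fun i : ℕ => ((-(i + 1 : ℤ)), (1 : ℤ)))) ++
          ((List.range (n - 1)).reverse.map
            (fun i : ℕ => ((-(i + 1 : ℤ)), (6 : ℤ) ^ (n - (i + 1)) - 1))) ++
          [((0 : ℤ), (6 : ℤ) ^ n)]) ∧
      γ.length = 2 * n - 1 ∧
      γ.length = hyperApprox.dist ((0 : ℤ), (0 : ℤ)) ((0 : ℤ), (6 : ℤ) ^ n) := by
  obtain ⟨m, rfl⟩ : ∃ m, n = m + 2 := ⟨n - 2, by omega⟩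
  simp only [show m + 2 - 1 = m + 1 by omega]
  set f : ℕ → ℤ × ℤ := fun i : ℕ => ((-(i + 1 : ℤ)), (1 : ℤ)) with hfdef
  set g : ℕ → ℤ × ℤ :=
    fun i : ℕ => ((-(i + 1 : ℤ)), (6 : ℤ) ^ (m + 2 - (i + 1)) - 1) with hgdef
  set B : ℤ × ℤ := ((0 : ℤ), (6 : ℤ) ^ (m + 2)) with hBdef
  have piece1 : List.Chain' hyperApprox.Adj
      ((((0:ℤ),(0:ℤ)) : ℤ × ℤ) :: (List.range (m+1)).map f) := by
    have eF : ((((0:ℤ),(0:ℤ)) : ℤ × ℤ)) :: (List.range (m+1)).map f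
        = (List.range (m+2)).map (fun i : ℕ => (((-(i:ℤ))), min (i:ℤ) 1)) := by
      have hr2 : List.range (m+2) = 0 :: List.map Nat.succ (List.range (m+1)) :=
        List.range_succ_eq_map (n := m+1)
      rw [hr2, List.map_cons, List.map_map]
      refine congrArg₂ List.cons (by norm_num) ?_
      refine List.map_congr_left fun i hi => ?_
      simp only [Function.comp_apply, hfdef, Prod.mk.injEq]
      exact ⟨by push_cast; ring, by omega⟩
    rw [eF]
    apply chain'_mapRange
    intro i hi
    match i with
    | 0 => simpa using hA1
    | (j+1) =>
      show hyperApprox.Adj ((-(↑(j+1) : ℤ)), min ((↑(j+1)):ℤ) 1)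
        ((-(↑(j+1+1) : ℤ)), min ((↑(j+1+1)):ℤ) 1)
      rw [show (min ((↑(j+1)):ℤ) 1) = 1 by omega, show (min ((↑(j+1+1)):ℤ) 1) = 1 by omega]
      exact hA2' (by push_cast; ring)
  have piece2 : List.Chain' hyperApprox.Adj ((List.range (m+1)).reverse.map g) := by
    show List.IsChain hyperApprox.Adj _
    rw [List.map_reverse, List.isChain_reverse]
    apply chain'_mapRange
    intro i hi
    show hyperApprox.Adj (g (i+1)) (g i)
    rw [hgdef]
    exact hA4 m i (by omega)
  have hchain' : List.Chain' hyperApprox.Adj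
      (((((0:ℤ),(0:ℤ)) : ℤ × ℤ) :: (List.range (m+1)).map f)
        ++ ((List.range (m+1)).reverse.map g ++ [B])) := by
    refine List.isChain_append.mpr ⟨piece1, List.isChain_append.mpr ⟨piece2, by simp, ?_⟩, ?_⟩
    · intro x hx y hy
      simp only [List.head?_cons, Option.mem_def, Option.some.injEq] at hy
      rw [List.map_reverse, List.getLast?_reverse] at hx
      rw [List.range_succ_eq_map, List.map_cons, List.head?_cons] at hx
      simp only [Option.mem_def, Option.some.injEq] at hx
      subst hx
      subst hy
      rw [hgdef, hBdef]
      exact hA5 m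
    · intro x hx y hy
      rw [List.range_succ, List.map_append] at hx
      simp only [List.map_cons, List.map_nil] at hx
      rw [← List.cons_append, List.getLast?_concat] at hx
      simp only [Option.mem_def, Option.some.injEq] at hx
      rw [List.range_succ, List.reverse_append] at hy
      simp only [List.reverse_cons, List.reverse_nil, List.nil_append, List.map_cons,
        List.cons_append, List.head?_cons, Option.mem_def, Option.some.injEq] at hx hy
      subst hx
      subst hy
      rw [hfdef, hgdef]
      exact hA3 m
  have hchain : List.Chain hyperApprox.Adj (((0:ℤ),(0:ℤ)) : ℤ × ℤ)
      (((List.range (m+1)).map f ++ (List.range (m+1)).reverse.map g) ++ [B]) := by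
    rw [List.cons_append, ← List.append_assoc] at hchain'
    exact hchain'
  refine ⟨listWalk hyperApprox _ _ _ hchain, ?_, ?_, ?_⟩
  · rw [listWalk_support]
    simp [List.append_assoc]
  · rw [listWalk_length]
    simp only [List.length_append, List.length_map, List.length_reverse, List.length_range]
    omega
  · have h1 := SimpleGraph.dist_le (listWalk hyperApprox _ _ _ hchain)
    obtain ⟨w, hw⟩ := SimpleGraph.Reachable.exists_walk_length_eq_dist
      (G := hyperApprox) ⟨listWalk hyperApprox _ _ _ hchain⟩
    have h2 := walk_length_lb (m+2) (by omega) w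
    rw [listWalk_length] at h1 ⊢
    simp only [List.length_append, List.length_map, List.length_range,
      List.length_reverse] at h1 ⊢
    omega


end Chordality
end

section
/- Let G be the Cartesian product graph ℕ □ ℕ with every edge of length 1. Then G is 2-densely 6-path-chordal: for every cycle C in G with L(C) ≥ 6 and every vertex (p,q) of C, either (p,q) is a shortcut vertex of C or some vertex of C adjacent to (p,q) is a shortcut vertex of C. -/
open SimpleGraph

namespace Chordality

/-- The graph `ℕ`, where `n` and `n + 1` are adjacent. -/
def nline : SimpleGraph ℕ := SimpleGraph.fromRel fun a b => b = a + 1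

/-- The Cartesian product graph `ℕ □ ℕ`. -/
def GNN : SimpleGraph (ℕ × ℕ) := nline.boxProd nline

section Infra

variable {V : Type*} {G : SimpleGraph V}

lemma wlen_one {u v : V} (w : G.Walk u v) : wlen (fun _ => (1:ℝ)) w = w.length := by
  induction w with
  | nil => simp [wlen]
  | cons h p ih =>
    simp only [wlen, Walk.edges_cons, List.map_cons, List.sum_cons, Walk.length_cons] at *
    rw [ih]; push_cast; ring

lemma end_mem_support_tail {u v : V} (w : G.Walk u v) (h : ¬ w.Nil) : v ∈ w.support.tail := by
  cases w with
  | nil => simp at h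
  | cons h' p => simpa using p.end_mem_support

lemma mem_support_iff_mem_tail {z : V} (c : G.Walk z z) (h : ¬ c.Nil) {y : V} :
    y ∈ c.support ↔ y ∈ c.support.tail := by
  constructor
  · intro hy
    rcases (c.mem_support_iff).1 hy with rfl | hy'
    · exact end_mem_support_tail c h
    · exact hy'
  · exact fun hy => List.mem_of_mem_tail hy

lemma rotate_not_nil [DecidableEq V] {z u : V} (c : G.Walk z z) (h : ¬ c.Nil) (hu : u ∈ c.support) :
    ¬ (c.rotate _ hu).Nil := by
  rw [Walk.nil_iff_length_eq] at *
  have h2 := (c.rotate_edges _ hu).perm.length_eq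
  rw [Walk.length_edges, Walk.length_edges] at h2
  omega

lemma mem_support_rotate_iff [DecidableEq V] {z u : V} (c : G.Walk z z) (hne : ¬ c.Nil) (hu : u ∈ c.support)
    {y : V} : y ∈ (c.rotate _ hu).support ↔ y ∈ c.support := by
  rw [mem_support_iff_mem_tail _ hne, mem_support_iff_mem_tail _ (rotate_not_nil c hne hu)]
  exact (c.support_rotate _ hu).mem_iff

lemma cycle_not_nil {z : V} {c : G.Walk z z} (hc : c.IsCycle) : ¬ c.Nil := by
  have := hc.three_le_length
  rw [Walk.nil_iff_length_eq]
  omega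

lemma cycle_walkIn [DecidableEq V] {z : V} (c : G.Walk z z) (hc : c.IsCycle) {u v : V}
    (hu : u ∈ c.support) (hv : v ∈ c.support) : ∃ w : G.Walk u v, WalkIn c w := by
  have hne : ¬ c.Nil := cycle_not_nil hc
  have hv' : v ∈ (c.rotate _ hu).support := (mem_support_rotate_iff c hne hu).2 hv
  refine ⟨(c.rotate _ hu).takeUntil v hv', ?_, ?_⟩
  · intro e he
    exact ((c.rotate_edges _ hu).mem_iff).1 (Walk.edges_takeUntil_subset _ hv' he)
  · intro a ha
    exact (mem_support_rotate_iff c hne hu).1 (Walk.support_takeUntil_subset _ hv' ha)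

lemma sym2_eq_elim {x y a : V} (hxa : x ≠ a) (h : s(x,y) = s(x,a)) : y = a := by
  rw [Sym2.eq_iff] at h
  rcases h with ⟨-, rfl⟩ | ⟨h1, rfl⟩
  · rfl
  · exact absurd h1 hxa

lemma exists_two_nbrs_aux {x : V} (c' : G.Walk x x) (hc' : c'.IsCycle) :
    ∃ a b, a ≠ b ∧ s(x,a) ∈ c'.edges ∧ s(x,b) ∈ c'.edges ∧
      ∀ y, s(x,y) ∈ c'.edges → y = a ∨ y = b := by
  cases c' with
  | nil => exact absurd hc'.three_le_length (by simp)
  | @cons _ a0 _ hadj w =>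
    have hlen : 2 ≤ w.length := by
      have := hc'.three_le_length
      simp only [Walk.length_cons] at this
      omega
    have hnd : w.support.Nodup := by
      have := hc'.support_nodup
      simpa using this
    have hxa0 : x ≠ a0 := hadj.ne
    obtain ⟨b0, hbadj, w2, hw2⟩ := Walk.exists_eq_cons_of_ne hxa0 w.reverse
    have hbedge : s(x,b0) ∈ w.edges := by
      have h1 : s(x,b0) ∈ w.reverse.edges := by rw [hw2]; simp
      rwa [Walk.edges_reverse, List.mem_reverse] at h1
    have hnodupE : (Walk.cons hadj w).edges.Nodup := hc'.isCircuit.isTrail.edges_nodup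
    rw [Walk.edges_cons, List.nodup_cons] at hnodupE
    refine ⟨a0, b0, ?_, by simp, List.mem_cons_of_mem _ hbedge, ?_⟩
    · rintro rfl
      exact hnodupE.1 hbedge
    · intro y hy
      rw [Walk.edges_cons, List.mem_cons] at hy
      rcases hy with h | hy
      · exact Or.inl (sym2_eq_elim hxa0 h)
      · right
        have hyr : s(x,y) ∈ w.reverse.edges := by
          rw [Walk.edges_reverse, List.mem_reverse]; exact hy
        rw [hw2, Walk.edges_cons, List.mem_cons] at hyr
        rcases hyr with h | h
        · exact sym2_eq_elim hbadj.ne h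
        · exfalso
          have hxs : x ∈ w2.support := Walk.fst_mem_support_of_mem_edges w2 h
          have hrs : w.reverse.support.Nodup := by
            rw [Walk.support_reverse]; exact List.nodup_reverse.mpr hnd
          rw [hw2, Walk.support_cons] at hrs
          exact (List.nodup_cons.1 hrs).1 hxs

lemma exists_two_nbrs [DecidableEq V] {z x : V} (c : G.Walk z z) (hc : c.IsCycle) (hx : x ∈ c.support) :
    ∃ a b, a ≠ b ∧ s(x,a) ∈ c.edges ∧ s(x,b) ∈ c.edges ∧
      ∀ y, s(x,y) ∈ c.edges → y = a ∨ y = b := by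
  have hrot := c.rotate_edges _ hx
  obtain ⟨a, b, hab, ha, hb, hcomp⟩ := exists_two_nbrs_aux (c.rotate _ hx) (hc.rotate hx)
  exact ⟨a, b, hab, hrot.mem_iff.1 ha, hrot.mem_iff.1 hb,
    fun y hy => hcomp y (hrot.mem_iff.2 hy)⟩

lemma other_nbr [DecidableEq V] {z x a : V} (c : G.Walk z z) (hc : c.IsCycle) (ha : s(x,a) ∈ c.edges) :
    ∃ t, t ≠ a ∧ s(x,t) ∈ c.edges ∧ ∀ y, s(x,y) ∈ c.edges → y = a ∨ y = t := by
  obtain ⟨u1, u2, h12, h1, h2, hcomp⟩ :=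
    exists_two_nbrs c hc (c.fst_mem_support_of_mem_edges ha)
  rcases hcomp a ha with h | h
  · subst h
    exact ⟨u2, fun h => h12 h.symm, h2, hcomp⟩
  · subst h
    exact ⟨u1, fun h => h12 h, h1, fun y hy => (hcomp y hy).symm⟩

lemma nbrs_complete [DecidableEq V] {z x a b : V} (c : G.Walk z z) (hc : c.IsCycle) (hab : a ≠ b)
    (ha : s(x,a) ∈ c.edges) (hb : s(x,b) ∈ c.edges) :
    ∀ y, s(x,y) ∈ c.edges → y = a ∨ y = b := by
  obtain ⟨t, hta, hts, hcomp⟩ := other_nbr c hc ha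
  have hbt : b = t := by
    rcases hcomp b hb with h | h
    · exact absurd h hab.symm
    · exact h
  subst hbt
  exact hcomp

lemma cdist_le_of_walkIn {z u v : V} (c : G.Walk z z) {w : G.Walk u v} (h : WalkIn c w) :
    cdist (fun _ => (1:ℝ)) c u v ≤ w.length := by
  apply csInf_le
  · refine ⟨0, ?_⟩
    rintro r ⟨w', -, rfl⟩
    rw [wlen_one]
    positivity
  · exact ⟨w, h, wlen_one w⟩

lemma le_cdist {z u v : V} (c : G.Walk z z) (hne : ∃ w : G.Walk u v, WalkIn c w) (n : ℕ)
    (h : ∀ w : G.Walk u v, WalkIn c w → n ≤ w.length) :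
    (n:ℝ) ≤ cdist (fun _ => (1:ℝ)) c u v := by
  apply le_csInf
  · obtain ⟨w, hw⟩ := hne
    exact ⟨_, w, hw, rfl⟩
  · rintro r ⟨w, hw, rfl⟩
    rw [wlen_one]
    exact_mod_cast h w hw

lemma dart_parity {u v : V} (g : V → Bool) (w : G.Walk u v) :
    (w.darts.countP fun d => g d.toProd.1 != g d.toProd.2) % 2 = if g u = g v then 0 else 1 := by
  induction w with
  | nil => simp
  | @cons u x v hadj p ih =>
    rw [Walk.darts_cons, List.countP_cons]
    cases hgu : g u <;> cases hgx : g x <;> cases hgv : g v <;> simp_all <;> omega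

lemma support_subset_of_closed {u v : V} (w : G.Walk u v) (S : Set V) (hu : u ∈ S)
    (hE : ∀ y y', s(y,y') ∈ w.edges → y ∈ S → y' ∈ S) : ∀ a ∈ w.support, a ∈ S := by
  induction w with
  | nil => intro a ha; simp at ha; subst ha; exact hu
  | @cons u x v hadj p ih =>
    intro a ha
    rw [Walk.support_cons, List.mem_cons] at ha
    rcases ha with rfl | ha
    · exact hu
    · refine ih ?_ ?_ a ha
      · exact hE u x (by simp) hu
      · intro y y' hy
        exact hE y y' (by rw [Walk.edges_cons]; exact List.mem_cons_of_mem _ hy)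

end Infra
section Grid

lemma nline_adj {a b : ℕ} : nline.Adj a b ↔ b = a + 1 ∨ a = b + 1 := by
  unfold nline
  rw [SimpleGraph.fromRel_adj]
  constructor
  · rintro ⟨-, h⟩; exact h
  · intro h; exact ⟨by omega, h⟩

lemma gnn_adj {u v : ℕ × ℕ} : GNN.Adj u v ↔
    (u.1 = v.1 ∧ (v.2 = u.2 + 1 ∨ u.2 = v.2 + 1)) ∨
    (u.2 = v.2 ∧ (v.1 = u.1 + 1 ∨ u.1 = v.1 + 1)) := by
  show (nline.boxProd nline).Adj u v ↔ _
  rw [SimpleGraph.boxProd_adj, nline_adj, nline_adj]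
  tauto

lemma grid_len_lb : ∀ {u v : ℕ×ℕ} (w : GNN.Walk u v),
    ((u.1:ℤ) - v.1).natAbs + ((u.2:ℤ) - v.2).natAbs ≤ w.length := by
  intro u v w
  induction w with
  | nil => simp
  | @cons u x v hadj p ih =>
    rw [Walk.length_cons]
    rcases gnn_adj.1 hadj with ⟨h1, h2 | h2⟩ | ⟨h1, h2 | h2⟩ <;> omega

lemma forceV {p q j : ℕ} (hlt : q < j) (w : GNN.Walk (p,q) (p,j)) (hlen : w.length = j - q) :
    s((p,q),(p,q+1)) ∈ w.edges ∧ (p,q+1) ∈ w.support := by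
  have hne : ((p,q) : ℕ×ℕ) ≠ (p,j) := by
    intro h; rw [Prod.ext_iff] at h; omega
  obtain ⟨y, hadj, w', rfl⟩ := Walk.exists_eq_cons_of_ne hne w
  have hlb := grid_len_lb w'
  rw [Walk.length_cons] at hlen
  rcases gnn_adj.1 hadj with ⟨h1, h2 | h2⟩ | ⟨h1, h2 | h2⟩
  · -- y = (p, q+1)
    have hy : y = (p, q+1) := by
      rw [Prod.ext_iff]; constructor <;> simp_all <;> omega
    subst hy
    exact ⟨by simp, by simp⟩
  all_goals (exfalso; simp only [] at hlb h1 h2; omega)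

lemma forceH {p q i : ℕ} (hlt : p < i) (w : GNN.Walk (p,q) (i,q)) (hlen : w.length = i - p) :
    s((p,q),(p+1,q)) ∈ w.edges ∧ (p+1,q) ∈ w.support := by
  have hne : ((p,q) : ℕ×ℕ) ≠ (i,q) := by
    intro h; rw [Prod.ext_iff] at h; omega
  obtain ⟨y, hadj, w', rfl⟩ := Walk.exists_eq_cons_of_ne hne w
  have hlb := grid_len_lb w'
  rw [Walk.length_cons] at hlen
  rcases gnn_adj.1 hadj with ⟨h1, h2 | h2⟩ | ⟨h1, h2 | h2⟩
  case inr.inl =>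
    -- y = (p+1, q)
    have hy : y = (p+1, q) := by
      rw [Prod.ext_iff]; constructor <;> simp_all <;> omega
    subst hy
    exact ⟨by simp, by simp⟩
  all_goals (exfalso; simp only [] at hlb h1 h2; omega)

def vwalk (p q : ℕ) : (k : ℕ) → GNN.Walk (p, q) (p, q + k)
  | 0 => Walk.nil
  | k+1 => (vwalk p q k).concat (gnn_adj.mpr (Or.inl ⟨rfl, Or.inl rfl⟩))

def hwalk (p q : ℕ) : (k : ℕ) → GNN.Walk (p, q) (p + k, q)
  | 0 => Walk.nil
  | k+1 => (hwalk p q k).concat (gnn_adj.mpr (Or.inr ⟨rfl, Or.inl rfl⟩))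

lemma vwalk_length (p q k : ℕ) : (vwalk p q k).length = k := by
  induction k with
  | zero => rfl
  | succ k ih => simp [vwalk, Walk.length_concat, ih]

lemma hwalk_length (p q k : ℕ) : (hwalk p q k).length = k := by
  induction k with
  | zero => rfl
  | succ k ih => simp [hwalk, Walk.length_concat, ih]

lemma vwalk_support (p q k : ℕ) :
    ∀ a, a ∈ (vwalk p q k).support ↔ ∃ i, i ≤ k ∧ a = (p, q + i) := by
  induction k with
  | zero =>
    intro a
    constructor
    · intro h
      simp only [vwalk, Walk.support_nil, List.mem_singleton] at h
      exact ⟨0, le_rfl, by simpa using h⟩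
    · rintro ⟨i, hi, rfl⟩
      interval_cases i
      simp [vwalk]
  | succ k ih =>
    intro a
    simp only [vwalk, Walk.support_concat, List.concat_eq_append, List.mem_append,
      List.mem_singleton, ih]
    constructor
    · rintro (⟨i, hi, rfl⟩ | rfl)
      · exact ⟨i, by omega, rfl⟩
      · exact ⟨k+1, le_rfl, rfl⟩
    · rintro ⟨i, hi, rfl⟩
      rcases Nat.lt_or_ge i (k+1) with h | h
      · exact Or.inl ⟨i, by omega, rfl⟩
      · right
        have : i = k+1 := by omega
        subst this
        rfl

lemma hwalk_support (p q k : ℕ) :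
    ∀ a, a ∈ (hwalk p q k).support ↔ ∃ i, i ≤ k ∧ a = (p + i, q) := by
  induction k with
  | zero =>
    intro a
    constructor
    · intro h
      simp only [hwalk, Walk.support_nil, List.mem_singleton] at h
      exact ⟨0, le_rfl, by simpa using h⟩
    · rintro ⟨i, hi, rfl⟩
      interval_cases i
      simp [hwalk]
  | succ k ih =>
    intro a
    simp only [hwalk, Walk.support_concat, List.concat_eq_append, List.mem_append,
      List.mem_singleton, ih]
    constructor
    · rintro (⟨i, hi, rfl⟩ | rfl)
      · exact ⟨i, by omega, rfl⟩
      · exact ⟨k+1, le_rfl, rfl⟩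
    · rintro ⟨i, hi, rfl⟩
      rcases Nat.lt_or_ge i (k+1) with h | h
      · exact Or.inl ⟨i, by omega, rfl⟩
      · right
        have : i = k+1 := by omega
        subst this
        rfl

lemma vwalk_isPath (p q k : ℕ) : (vwalk p q k).IsPath := by
  rw [Walk.isPath_def]
  induction k with
  | zero => simp [vwalk]
  | succ k ih =>
    simp only [vwalk, Walk.support_concat, List.concat_eq_append]
    rw [List.nodup_append]
    refine ⟨ih, List.nodup_singleton _, ?_⟩
    intro a ha b hb' hb
    rw [List.mem_singleton] at hb'
    subst hb'
    obtain ⟨i, hi, rfl⟩ := (vwalk_support p q k a).1 ha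
    rw [Prod.ext_iff] at hb
    omega

lemma hwalk_isPath (p q k : ℕ) : (hwalk p q k).IsPath := by
  rw [Walk.isPath_def]
  induction k with
  | zero => simp [hwalk]
  | succ k ih =>
    simp only [hwalk, Walk.support_concat, List.concat_eq_append]
    rw [List.nodup_append]
    refine ⟨ih, List.nodup_singleton _, ?_⟩
    intro a ha b hb' hb
    rw [List.mem_singleton] at hb'
    subst hb'
    obtain ⟨i, hi, rfl⟩ := (hwalk_support p q k a).1 ha
    rw [Prod.ext_iff] at hb
    omega

end Grid
section Shortcuts

abbrev one : Sym2 (ℕ×ℕ) → ℝ := fun _ => (1:ℝ)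

lemma vertShortcut {z : ℕ×ℕ} (c : GNN.Walk z z)
    (hconn : ∀ u v : ℕ×ℕ, u ∈ c.support → v ∈ c.support → ∃ w : GNN.Walk u v, WalkIn c w)
    {p q j : ℕ} (hlt : q < j)
    (hq : (p,q) ∈ c.support) (hj : (p,j) ∈ c.support)
    (hmid : ∀ i, q < i → i < j → (p,i) ∉ c.support)
    (hedge : j = q + 1 → s((p,q),(p,j)) ∉ c.edges) :
    ShortcutVertex one c (p,q) ∧ ShortcutVertex one c (p,j) := by
  have hqj : q + (j - q) = j := by omega
  set σ : GNN.Walk (p,q) (p,j) := (vwalk p q (j-q)).copy rfl (by rw [hqj]) with hσ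
  have hσsup : ∀ a, a ∈ σ.support ↔ ∃ i, i ≤ j - q ∧ a = (p, q + i) := by
    intro a
    rw [hσ, Walk.support_copy]
    exact vwalk_support p q (j-q) a
  have hσlen : σ.length = j - q := by
    rw [hσ, Walk.length_copy, vwalk_length]
  have hstrict : IsStrictShortcut one c σ := by
    refine ⟨⟨?_, hq, hj, ?_⟩, ?_⟩
    · rw [hσ, Walk.isPath_copy]
      exact vwalk_isPath p q (j-q)
    · rw [wlen_one, hσlen]
      have h2 : ((j - q + 1 : ℕ):ℝ) ≤ cdist one c (p,q) (p,j) := by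
        apply le_cdist c (hconn _ _ hq hj)
        intro w hw
        have hlb' : ((q:ℤ) - j).natAbs ≤ w.length := by simpa using grid_len_lb w
        by_contra hcon
        push_neg at hcon
        have hwl : w.length = j - q := by omega
        obtain ⟨he, hs⟩ := forceV hlt w hwl
        rcases Nat.lt_or_ge (q+1) j with hj1 | hj1
        · exact hmid (q+1) (by omega) hj1 (hw.2 _ hs)
        · have hjq : j = q+1 := by omega
          subst hjq
          exact hedge rfl (hw.1 _ he)
      have h1 : ((j - q:ℕ):ℝ) < ((j - q + 1:ℕ):ℝ) := by exact_mod_cast Nat.lt_succ_self _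
      exact lt_of_lt_of_le h1 h2
    · intro a haσ hac
      obtain ⟨i, hi, rfl⟩ := (hσsup a).1 haσ
      rcases Nat.eq_zero_or_pos i with rfl | hpos
      · left; simp
      · rcases Nat.lt_or_ge i (j - q) with h | h
        · exact absurd hac (hmid (q+i) (by omega) (by omega))
        · right
          have : q + i = j := by omega
          rw [this]
  exact ⟨⟨_, _, σ, hstrict, Or.inl rfl⟩, ⟨_, _, σ, hstrict, Or.inr rfl⟩⟩

lemma horizShortcut {z : ℕ×ℕ} (c : GNN.Walk z z)
    (hconn : ∀ u v : ℕ×ℕ, u ∈ c.support → v ∈ c.support → ∃ w : GNN.Walk u v, WalkIn c w)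
    {p q i : ℕ} (hlt : p < i)
    (hp : (p,q) ∈ c.support) (hi : (i,q) ∈ c.support)
    (hmid : ∀ i', p < i' → i' < i → (i',q) ∉ c.support)
    (hedge : i = p + 1 → s((p,q),(i,q)) ∉ c.edges) :
    ShortcutVertex one c (p,q) ∧ ShortcutVertex one c (i,q) := by
  have hpi : p + (i - p) = i := by omega
  set σ : GNN.Walk (p,q) (i,q) := (hwalk p q (i-p)).copy rfl (by rw [hpi]) with hσ
  have hσsup : ∀ a, a ∈ σ.support ↔ ∃ i', i' ≤ i - p ∧ a = (p + i', q) := by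
    intro a
    rw [hσ, Walk.support_copy]
    exact hwalk_support p q (i-p) a
  have hσlen : σ.length = i - p := by
    rw [hσ, Walk.length_copy, hwalk_length]
  have hstrict : IsStrictShortcut one c σ := by
    refine ⟨⟨?_, hp, hi, ?_⟩, ?_⟩
    · rw [hσ, Walk.isPath_copy]
      exact hwalk_isPath p q (i-p)
    · rw [wlen_one, hσlen]
      have h2 : ((i - p + 1 : ℕ):ℝ) ≤ cdist one c (p,q) (i,q) := by
        apply le_cdist c (hconn _ _ hp hi)
        intro w hw
        have hlb' : ((p:ℤ) - i).natAbs ≤ w.length := by simpa using grid_len_lb w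
        by_contra hcon
        push_neg at hcon
        have hwl : w.length = i - p := by omega
        obtain ⟨he, hs⟩ := forceH hlt w hwl
        rcases Nat.lt_or_ge (p+1) i with hi1 | hi1
        · exact hmid (p+1) (by omega) hi1 (hw.2 _ hs)
        · have hip : i = p+1 := by omega
          subst hip
          exact hedge rfl (hw.1 _ he)
      have h1 : ((i - p:ℕ):ℝ) < ((i - p + 1:ℕ):ℝ) := by exact_mod_cast Nat.lt_succ_self _
      exact lt_of_lt_of_le h1 h2
    · intro a haσ hac
      obtain ⟨i', hi', rfl⟩ := (hσsup a).1 haσ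
      rcases Nat.eq_zero_or_pos i' with rfl | hpos
      · left; simp
      · rcases Nat.lt_or_ge i' (i - p) with h | h
        · exact absurd hac (hmid (p+i') (by omega) (by omega))
        · right
          have : p + i' = i := by omega
          rw [this]
  exact ⟨⟨_, _, σ, hstrict, Or.inl rfl⟩, ⟨_, _, σ, hstrict, Or.inr rfl⟩⟩

lemma vertAppUp {z : ℕ×ℕ} (c : GNN.Walk z z)
    (hconn : ∀ u v : ℕ×ℕ, u ∈ c.support → v ∈ c.support → ∃ w : GNN.Walk u v, WalkIn c w)
    {p q : ℕ} (hq : (p,q) ∈ c.support)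
    (hhit : ∃ j, q < j ∧ (p,j) ∈ c.support)
    (hedge : s((p,q),(p,q+1)) ∉ c.edges) :
    ShortcutVertex one c (p,q) := by
  classical
  have hfind := Nat.find_spec hhit
  set m := Nat.find hhit with hm
  refine (vertShortcut c hconn hfind.1 hq hfind.2 ?_ ?_).1
  · intro i h1 h2 hmem
    exact Nat.find_min hhit h2 ⟨h1, hmem⟩
  · intro h
    rw [← h] at hedge
    intro hc
    exact hedge (by simpa [h] using hc)

lemma vertAppDown {z : ℕ×ℕ} (c : GNN.Walk z z)
    (hconn : ∀ u v : ℕ×ℕ, u ∈ c.support → v ∈ c.support → ∃ w : GNN.Walk u v, WalkIn c w)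
    {p q : ℕ} (hq : (p,q) ∈ c.support)
    (hhit : ∃ j, j < q ∧ (p,j) ∈ c.support)
    (hedge : ∀ j, j + 1 = q → s((p,j),(p,q)) ∉ c.edges) :
    ShortcutVertex one c (p,q) := by
  classical
  obtain ⟨j0, hj0q, hj0⟩ := hhit
  set P : ℕ → Prop := fun i => (p,i) ∈ c.support with hP
  have hq1 : 1 ≤ q := by omega
  set m := Nat.findGreatest P (q-1) with hm
  have hmspec : P m := Nat.findGreatest_spec (m := j0) (by omega) hj0
  have hmle : m ≤ q - 1 := Nat.findGreatest_le _
  refine (vertShortcut c hconn (by omega : m < q) hmspec hq ?_ ?_).2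
  · intro i h1 h2 hmem
    exact Nat.findGreatest_is_greatest (P := P) (n := q-1) (by omega) (by omega) hmem
  · intro h
    exact hedge m (by omega)

lemma horizAppRight {z : ℕ×ℕ} (c : GNN.Walk z z)
    (hconn : ∀ u v : ℕ×ℕ, u ∈ c.support → v ∈ c.support → ∃ w : GNN.Walk u v, WalkIn c w)
    {p q : ℕ} (hq : (p,q) ∈ c.support)
    (hhit : ∃ i, p < i ∧ (i,q) ∈ c.support)
    (hedge : s((p,q),(p+1,q)) ∉ c.edges) :
    ShortcutVertex one c (p,q) := by
  classical
  have hfind := Nat.find_spec hhit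
  refine (horizShortcut c hconn hfind.1 hq hfind.2 ?_ ?_).1
  · intro i h1 h2 hmem
    exact Nat.find_min hhit h2 ⟨h1, hmem⟩
  · intro h
    rw [← h] at hedge
    intro hc
    exact hedge (by simpa [h] using hc)

lemma horizAppLeft {z : ℕ×ℕ} (c : GNN.Walk z z)
    (hconn : ∀ u v : ℕ×ℕ, u ∈ c.support → v ∈ c.support → ∃ w : GNN.Walk u v, WalkIn c w)
    {p q : ℕ} (hq : (p,q) ∈ c.support)
    (hhit : ∃ i, i < p ∧ (i,q) ∈ c.support)
    (hedge : ∀ i, i + 1 = p → s((i,q),(p,q)) ∉ c.edges) :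
    ShortcutVertex one c (p,q) := by
  classical
  obtain ⟨i0, hi0p, hi0⟩ := hhit
  set P : ℕ → Prop := fun i => (i,q) ∈ c.support with hP
  have hp1 : 1 ≤ p := by omega
  set m := Nat.findGreatest P (p-1) with hm
  have hmspec : P m := Nat.findGreatest_spec (m := i0) (by omega) hi0
  have hmle : m ≤ p - 1 := Nat.findGreatest_le _
  refine (horizShortcut c hconn (by omega : m < p) hmspec hq ?_ ?_).2
  · intro i h1 h2 hmem
    exact Nat.findGreatest_is_greatest (P := P) (n := p-1) (by omega) (by omega) hmem
  · intro h
    exact hedge m (by omega)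

lemma edgeShortcut {z : ℕ×ℕ} (c : GNN.Walk z z)
    (hconn : ∀ u v : ℕ×ℕ, u ∈ c.support → v ∈ c.support → ∃ w : GNN.Walk u v, WalkIn c w)
    {u v : ℕ×ℕ} (hadj : GNN.Adj u v)
    (hu : u ∈ c.support) (hv : v ∈ c.support) (he : s(u,v) ∉ c.edges) :
    ShortcutVertex one c u ∧ ShortcutVertex one c v := by
  set σ : GNN.Walk u v := Walk.cons hadj Walk.nil with hσ
  have hstrict : IsStrictShortcut one c σ := by
    refine ⟨⟨?_, hu, hv, ?_⟩, ?_⟩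
    · rw [hσ, Walk.isPath_def]
      simp [hadj.ne]
    · have hwl : wlen one σ = 1 := by
        rw [wlen_one, hσ]
        simp
      rw [hwl]
      have h2 : ((2:ℕ):ℝ) ≤ cdist one c u v := by
        apply le_cdist c (hconn _ _ hu hv)
        intro w hw
        by_contra hcon
        push_neg at hcon
        have : w.length = 0 ∨ w.length = 1 := by omega
        rcases this with h0 | h1
        · exact hadj.ne (Walk.eq_of_length_eq_zero h0)
        · obtain ⟨y, hadj', w', rfl⟩ := Walk.exists_eq_cons_of_ne hadj.ne w
          rw [Walk.length_cons] at h1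
          have hy : y = v := by
            have h0 : w'.length = 0 := by omega
            exact Walk.eq_of_length_eq_zero h0
          subst hy
          exact he (hw.1 _ (by simp))
      have : (1:ℝ) < ((2:ℕ):ℝ) := by norm_num
      exact lt_of_lt_of_le this h2
    · intro a ha hac
      rw [hσ] at ha
      simp only [Walk.support_cons, Walk.support_nil, List.mem_cons, List.mem_singleton] at ha
      tauto
  exact ⟨⟨_, _, σ, hstrict, Or.inl rfl⟩, ⟨_, _, σ, hstrict, Or.inr rfl⟩⟩

end Shortcuts
section Parity

lemma crossH {z : ℕ×ℕ} (c : GNN.Walk z z) (hnod : c.edges.Nodup) {m j0 : ℕ}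
    (h : s((m,j0),(m+1,j0)) ∈ c.edges) :
    ∃ j, j ≠ j0 ∧ s((m,j),(m+1,j)) ∈ c.edges := by
  by_contra hcon
  push_neg at hcon
  set g : ℕ×ℕ → Bool := fun v => decide (v.1 ≤ m) with hg
  have hpar := dart_parity g c
  rw [if_pos rfl] at hpar
  have hedges : c.edges = c.darts.map Dart.edge := rfl
  have hm1 : ¬ (m+1 ≤ m) := by omega
  have hmono : ∀ d ∈ c.darts, (g d.toProd.1 != g d.toProd.2) = true →
      (d.edge = s((m,j0),(m+1,j0))) := by
    intro d hd hP
    obtain ⟨⟨⟨x1,x2⟩,y1,y2⟩, hadj⟩ := d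
    have hPP : ¬ (x1 ≤ m ↔ y1 ≤ m) := by
      intro hiff
      rw [hg] at hP
      simp only [bne_iff_ne, ne_eq, decide_eq_decide] at hP
      exact hP hiff
    have hcase : (x1 ≤ m ∧ ¬ y1 ≤ m) ∨ (¬ x1 ≤ m ∧ y1 ≤ m) := by tauto
    rcases gnn_adj.1 hadj with ⟨h1, -⟩ | ⟨h1, h2⟩
    · dsimp only at h1
      omega
    · dsimp only at h1 h2
      subst h1
      rcases h2 with h2 | h2
      · have hxm : x1 = m := by omega
        have hym : y1 = m+1 := by omega
        have hmem : s((m,x2),(m+1,x2)) ∈ c.edges := by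
          rw [hedges]
          refine List.mem_map.2 ⟨⟨((x1,x2),(y1,x2)),hadj⟩, hd, ?_⟩
          show s((x1,x2),(y1,x2)) = _
          rw [hxm, hym]
        have hx2 : x2 = j0 := by
          by_contra hne
          exact hcon _ hne hmem
        show s((x1,x2),(y1,x2)) = s((m,j0),(m+1,j0))
        rw [hxm, hym, hx2]
      · have hxm : x1 = m+1 := by omega
        have hym : y1 = m := by omega
        have hmem : s((m,x2),(m+1,x2)) ∈ c.edges := by
          rw [hedges]
          refine List.mem_map.2 ⟨⟨((x1,x2),(y1,x2)),hadj⟩, hd, ?_⟩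
          show s((x1,x2),(y1,x2)) = _
          rw [hxm, hym, Sym2.eq_swap]
        have hx2 : x2 = j0 := by
          by_contra hne
          exact hcon _ hne hmem
        show s((x1,x2),(y1,x2)) = s((m,j0),(m+1,j0))
        rw [hxm, hym, hx2, Sym2.eq_swap]
  have hcount1 : c.darts.countP (fun d => g d.toProd.1 != g d.toProd.2) ≤
      c.darts.countP (fun d => d.edge == s((m,j0),(m+1,j0))) := by
    apply List.countP_mono_left
    intro d hd hP
    simp only [beq_iff_eq]
    exact hmono d hd hP
  have hcount2 : c.darts.countP (fun d => d.edge == s((m,j0),(m+1,j0))) =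
      c.edges.count s((m,j0),(m+1,j0)) := by
    rw [hedges, List.count, List.countP_map]
    rfl
  have hcnt1 : c.edges.count s((m,j0),(m+1,j0)) = 1 := List.count_eq_one_of_mem hnod h
  have hpos : 0 < c.darts.countP (fun d => g d.toProd.1 != g d.toProd.2) := by
    rw [List.countP_pos_iff]
    obtain ⟨d, hd, hde⟩ := List.mem_map.1 (by rw [hedges] at h; exact h)
    refine ⟨d, hd, ?_⟩
    obtain ⟨⟨⟨x1,x2⟩,y1,y2⟩, hadj⟩ := d
    have hde' : s((x1,x2),(y1,y2)) = s((m,j0),(m+1,j0)) := hde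
    rw [Sym2.eq_iff] at hde'
    rcases hde' with ⟨h1, h2⟩ | ⟨h1, h2⟩ <;> rw [Prod.mk.injEq] at h1 h2
    · have hx : x1 = m := h1.1
      have hy : y1 = m+1 := h2.1
      subst hx
      subst hy
      simp [hg, hm1]
    · have hx : x1 = m+1 := h1.1
      have hy : y1 = m := h2.1
      subst hx
      subst hy
      simp [hg, hm1]
  omega

lemma crossV {z : ℕ×ℕ} (c : GNN.Walk z z) (hnod : c.edges.Nodup) {m i0 : ℕ}
    (h : s((i0,m),(i0,m+1)) ∈ c.edges) :
    ∃ i, i ≠ i0 ∧ s((i,m),(i,m+1)) ∈ c.edges := by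
  by_contra hcon
  push_neg at hcon
  set g : ℕ×ℕ → Bool := fun v => decide (v.2 ≤ m) with hg
  have hpar := dart_parity g c
  rw [if_pos rfl] at hpar
  have hedges : c.edges = c.darts.map Dart.edge := rfl
  have hm1 : ¬ (m+1 ≤ m) := by omega
  have hmono : ∀ d ∈ c.darts, (g d.toProd.1 != g d.toProd.2) = true →
      (d.edge = s((i0,m),(i0,m+1))) := by
    intro d hd hP
    obtain ⟨⟨⟨x1,x2⟩,y1,y2⟩, hadj⟩ := d
    have hPP : ¬ (x2 ≤ m ↔ y2 ≤ m) := by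
      intro hiff
      rw [hg] at hP
      simp only [bne_iff_ne, ne_eq, decide_eq_decide] at hP
      exact hP hiff
    have hcase : (x2 ≤ m ∧ ¬ y2 ≤ m) ∨ (¬ x2 ≤ m ∧ y2 ≤ m) := by tauto
    rcases gnn_adj.1 hadj with ⟨h1, h2⟩ | ⟨h1, -⟩
    swap
    · dsimp only at h1
      omega
    dsimp only at h1 h2
    subst h1
    rcases h2 with h2 | h2
    · have hxm : x2 = m := by omega
      have hym : y2 = m+1 := by omega
      have hmem : s((x1,m),(x1,m+1)) ∈ c.edges := by
        rw [hedges]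
        refine List.mem_map.2 ⟨⟨((x1,x2),(x1,y2)),hadj⟩, hd, ?_⟩
        show s((x1,x2),(x1,y2)) = _
        rw [hxm, hym]
      have hx1 : x1 = i0 := by
        by_contra hne
        exact hcon _ hne hmem
      show s((x1,x2),(x1,y2)) = s((i0,m),(i0,m+1))
      rw [hxm, hym, hx1]
    · have hxm : x2 = m+1 := by omega
      have hym : y2 = m := by omega
      have hmem : s((x1,m),(x1,m+1)) ∈ c.edges := by
        rw [hedges]
        refine List.mem_map.2 ⟨⟨((x1,x2),(x1,y2)),hadj⟩, hd, ?_⟩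
        show s((x1,x2),(x1,y2)) = _
        rw [hxm, hym, Sym2.eq_swap]
      have hx1 : x1 = i0 := by
        by_contra hne
        exact hcon _ hne hmem
      show s((x1,x2),(x1,y2)) = s((i0,m),(i0,m+1))
      rw [hxm, hym, hx1, Sym2.eq_swap]
  have hcount1 : c.darts.countP (fun d => g d.toProd.1 != g d.toProd.2) ≤
      c.darts.countP (fun d => d.edge == s((i0,m),(i0,m+1))) := by
    apply List.countP_mono_left
    intro d hd hP
    simp only [beq_iff_eq]
    exact hmono d hd hP
  have hcount2 : c.darts.countP (fun d => d.edge == s((i0,m),(i0,m+1))) =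
      c.edges.count s((i0,m),(i0,m+1)) := by
    rw [hedges, List.count, List.countP_map]
    rfl
  have hcnt1 : c.edges.count s((i0,m),(i0,m+1)) = 1 := List.count_eq_one_of_mem hnod h
  have hpos : 0 < c.darts.countP (fun d => g d.toProd.1 != g d.toProd.2) := by
    rw [List.countP_pos_iff]
    obtain ⟨d, hd, hde⟩ := List.mem_map.1 (by rw [hedges] at h; exact h)
    refine ⟨d, hd, ?_⟩
    obtain ⟨⟨⟨x1,x2⟩,y1,y2⟩, hadj⟩ := d
    have hde' : s((x1,x2),(y1,y2)) = s((i0,m),(i0,m+1)) := hde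
    rw [Sym2.eq_iff] at hde'
    rcases hde' with ⟨h1, h2⟩ | ⟨h1, h2⟩ <;> rw [Prod.mk.injEq] at h1 h2
    · have hx : x2 = m := h1.2
      have hy : y2 = m+1 := h2.2
      subst hx
      subst hy
      simp [hg, hm1]
    · have hx : x2 = m+1 := h1.2
      have hy : y2 = m := h2.2
      subst hx
      subst hy
      simp [hg, hm1]
  omega

end Parity
section Main

lemma no_four_cycle {z : ℕ×ℕ} {c : GNN.Walk z z} (hc : c.IsCycle) (hlen : 6 ≤ c.length)
    {x a b w : ℕ×ℕ}
    (hxa : x ≠ a) (hxb : x ≠ b) (hxw : x ≠ w) (hab : a ≠ b) (haw : a ≠ w) (hbw : b ≠ w)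
    (e1 : s(x,a) ∈ c.edges) (e2 : s(a,w) ∈ c.edges)
    (e3 : s(w,b) ∈ c.edges) (e4 : s(b,x) ∈ c.edges) : False := by
  classical
  have cx := nbrs_complete c hc hab e1 (by rwa [Sym2.eq_swap] at e4)
  have ca := nbrs_complete c hc hxw (by rwa [Sym2.eq_swap] at e1) e2
  have cw := nbrs_complete c hc hab (by rwa [Sym2.eq_swap] at e2) e3
  have cb : ∀ y, s(b,y) ∈ c.edges → y = w ∨ y = x :=
    nbrs_complete c hc (fun h => hxw h.symm) (by rwa [Sym2.eq_swap] at e3) e4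
  set S : Set (ℕ×ℕ) := {x, a, b, w} with hS
  have hx : x ∈ c.support := c.fst_mem_support_of_mem_edges e1
  have hne := cycle_not_nil hc
  have hsub : ∀ y ∈ c.support, y ∈ S := by
    intro y hy
    have hy' : y ∈ (c.rotate _ hx).support := (mem_support_rotate_iff c hne hx).2 hy
    refine support_subset_of_closed (c.rotate _ hx) S (by simp [hS]) ?_ y hy'
    intro y1 y2 hyy hy1
    have hyyc : s(y1,y2) ∈ c.edges := (c.rotate_edges _ hx).mem_iff.1 hyy
    simp only [hS, Set.mem_insert_iff, Set.mem_singleton_iff] at hy1 ⊢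
    rcases hy1 with rfl | rfl | rfl | rfl
    · rcases cx y2 hyyc with rfl | rfl <;> tauto
    · rcases ca y2 hyyc with rfl | rfl <;> tauto
    · rcases cb y2 hyyc with rfl | rfl <;> tauto
    · rcases cw y2 hyyc with rfl | rfl <;> tauto
  have htail : (c.support.tail).Nodup := hc.support_nodup
  have hsubl : c.support.tail ⊆ [x,a,b,w] := by
    intro y hy
    have h' := hsub y (List.mem_of_mem_tail hy)
    simp only [hS, Set.mem_insert_iff, Set.mem_singleton_iff] at h'
    simp only [List.mem_cons, List.mem_singleton]
    tauto
  have hlen2 : c.support.tail.length ≤ 4 := by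
    have h' := (List.subperm_of_subset htail hsubl).length_le
    simpa using h'
  have hsuplen := c.length_support
  have htl : c.support.tail.length = c.support.length - 1 := by
    simp [List.length_tail]
  omega

lemma straightV {z : ℕ×ℕ} (c : GNN.Walk z z) (hc : c.IsCycle) {p q : ℕ} {a b : ℕ×ℕ}
    (hx : (p,q) ∈ c.support) (hab : a ≠ b)
    (ha : s((p,q),a) ∈ c.edges) (hb : s((p,q),b) ∈ c.edges)
    (ha1 : a.1 = p) (hb1 : b.1 = p) :
    ShortcutVertex one c (p,q) := by
  classical
  have hconn' : ∀ u v : ℕ×ℕ, u ∈ c.support → v ∈ c.support →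
      ∃ w : GNN.Walk u v, WalkIn c w := fun u v hu hv => cycle_walkIn c hc hu hv
  have hnod : c.edges.Nodup := hc.isCircuit.isTrail.edges_nodup
  have hcompx := nbrs_complete c hc hab ha hb
  have hadja := c.adj_of_mem_edges ha
  obtain ⟨A1, A2⟩ := a
  dsimp only at ha1
  rw [ha1] at ha hadja
  have hEright : s((p,q),(p+1,q)) ∉ c.edges := by
    intro hmem
    rcases hcompx _ hmem with h | h
    · rw [Prod.mk.injEq] at h; omega
    · rw [← h] at hb1; dsimp only at hb1; omega
  have hEleft : ∀ i', i' + 1 = p → s((i',q),(p,q)) ∉ c.edges := by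
    intro i' hi' hmem
    rw [Sym2.eq_swap] at hmem
    rcases hcompx _ hmem with h | h
    · rw [Prod.mk.injEq] at h; omega
    · rw [← h] at hb1; dsimp only at hb1; omega
  have hhit : ∃ i, i ≠ p ∧ (i, q) ∈ c.support := by
    rcases gnn_adj.1 hadja with ⟨-, h2 | h2⟩ | ⟨h1, h2⟩
    · -- A2 = q + 1
      dsimp only at h2
      have hedge : s((p,q),(p,q+1)) ∈ c.edges := by rw [← h2]; exact ha
      obtain ⟨i, hip, hie⟩ := crossV c hnod hedge
      exact ⟨i, hip, c.fst_mem_support_of_mem_edges hie⟩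
    · -- q = A2 + 1
      dsimp only at h2
      have hedge : s((p,A2),(p,A2+1)) ∈ c.edges := by
        rw [← h2]
        rw [Sym2.eq_swap] at ha
        exact ha
      obtain ⟨i, hip, hie⟩ := crossV c hnod hedge
      refine ⟨i, hip, ?_⟩
      have := c.snd_mem_support_of_mem_edges hie
      rwa [← h2] at this
    · dsimp only at h1 h2; omega
  obtain ⟨i, hip, himem⟩ := hhit
  rcases Nat.lt_or_ge p i with hlt | hge
  · exact horizAppRight c hconn' hx ⟨i, hlt, himem⟩ hEright
  · exact horizAppLeft c hconn' hx ⟨i, by omega, himem⟩ hEleft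

lemma straightH {z : ℕ×ℕ} (c : GNN.Walk z z) (hc : c.IsCycle) {p q : ℕ} {a b : ℕ×ℕ}
    (hx : (p,q) ∈ c.support) (hab : a ≠ b)
    (ha : s((p,q),a) ∈ c.edges) (hb : s((p,q),b) ∈ c.edges)
    (ha1 : a.2 = q) (hb1 : b.2 = q) :
    ShortcutVertex one c (p,q) := by
  classical
  have hconn' : ∀ u v : ℕ×ℕ, u ∈ c.support → v ∈ c.support →
      ∃ w : GNN.Walk u v, WalkIn c w := fun u v hu hv => cycle_walkIn c hc hu hv
  have hnod : c.edges.Nodup := hc.isCircuit.isTrail.edges_nodup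
  have hcompx := nbrs_complete c hc hab ha hb
  have hadja := c.adj_of_mem_edges ha
  obtain ⟨A1, A2⟩ := a
  dsimp only at ha1
  rw [ha1] at ha hadja
  have hEup : s((p,q),(p,q+1)) ∉ c.edges := by
    intro hmem
    rcases hcompx _ hmem with h | h
    · rw [Prod.mk.injEq] at h; omega
    · rw [← h] at hb1; dsimp only at hb1; omega
  have hEdown : ∀ j', j' + 1 = q → s((p,j'),(p,q)) ∉ c.edges := by
    intro j' hj' hmem
    rw [Sym2.eq_swap] at hmem
    rcases hcompx _ hmem with h | h
    · rw [Prod.mk.injEq] at h; omega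
    · rw [← h] at hb1; dsimp only at hb1; omega
  have hhit : ∃ j, j ≠ q ∧ (p, j) ∈ c.support := by
    rcases gnn_adj.1 hadja with ⟨h1, h2⟩ | ⟨-, h2 | h2⟩
    · dsimp only at h1 h2; omega
    · -- A1 = p + 1
      dsimp only at h2
      have hedge : s((p,q),(p+1,q)) ∈ c.edges := by rw [← h2]; exact ha
      obtain ⟨j, hjq, hje⟩ := crossH c hnod hedge
      exact ⟨j, hjq, c.fst_mem_support_of_mem_edges hje⟩
    · -- p = A1 + 1
      dsimp only at h2
      have hedge : s((A1,q),(A1+1,q)) ∈ c.edges := by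
        rw [← h2]
        rw [Sym2.eq_swap] at ha
        exact ha
      obtain ⟨j, hjq, hje⟩ := crossH c hnod hedge
      refine ⟨j, hjq, ?_⟩
      have := c.snd_mem_support_of_mem_edges hje
      rwa [← h2] at this
  obtain ⟨j, hjq, hjmem⟩ := hhit
  rcases Nat.lt_or_ge q j with hlt | hge
  · exact vertAppUp c hconn' hx ⟨j, hlt, hjmem⟩ hEup
  · exact vertAppDown c hconn' hx ⟨j, by omega, hjmem⟩ hEdown

end Main
section Corner

lemma cornerCase {z : ℕ×ℕ} (c : GNN.Walk z z) (hc : c.IsCycle) (hlen : 6 ≤ c.length)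
    {p q a1 b2 : ℕ}
    (hx : (p,q) ∈ c.support)
    (ha : s((p,q),(a1,q)) ∈ c.edges) (hb : s((p,q),(p,b2)) ∈ c.edges)
    (ha1 : a1 = p + 1 ∨ p = a1 + 1) (hb2 : b2 = q + 1 ∨ q = b2 + 1) :
    ∃ v, ShortcutVertex one c v ∧ (v = (p,q) ∨ s((p,q),v) ∈ c.edges) := by
  classical
  have hconn' : ∀ u v : ℕ×ℕ, u ∈ c.support → v ∈ c.support →
      ∃ w : GNN.Walk u v, WalkIn c w := fun u v hu hv => cycle_walkIn c hc hu hv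
  have hnod : c.edges.Nodup := hc.isCircuit.isTrail.edges_nodup
  have hane : ((a1,q) : ℕ×ℕ) ≠ (p,b2) := by
    intro hE; rw [Prod.mk.injEq] at hE; omega
  have hcompx := nbrs_complete c hc hane ha hb
  have hamem : ((a1,q) : ℕ×ℕ) ∈ c.support := c.snd_mem_support_of_mem_edges ha
  have hbmem : ((p,b2) : ℕ×ℕ) ∈ c.support := c.snd_mem_support_of_mem_edges hb
  -- a's other neighbour t
  obtain ⟨t, htx, hta, hcompa⟩ := other_nbr c hc (show s((a1,q),(p,q)) ∈ c.edges by
    rwa [Sym2.eq_swap] at ha)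
  have hadjt := c.adj_of_mem_edges hta
  obtain ⟨t1, t2⟩ := t
  rcases gnn_adj.1 hadjt with ⟨h1, ht2⟩ | ⟨h1, ht1⟩
  swap
  · -- t horizontal: a is a straight horizontal vertex
    dsimp only at h1 ht1
    refine ⟨(a1,q), ?_, Or.inr ha⟩
    refine straightH c hc hamem (a := (p,q)) (b := (t1,t2)) ?_
      (by rwa [Sym2.eq_swap] at ha) hta rfl h1.symm
    exact fun h => htx h.symm
  -- t vertical : t = (a1, t2)
  dsimp only at h1 ht2
  rw [← h1] at hta htx hcompa
  by_cases htb : t2 = b2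
  · -- a continues to w = (a1,b2); strict shortcut edge from b to w
    rw [htb] at hta
    have hw_adj : GNN.Adj (p,b2) (a1,b2) := by
      rw [gnn_adj]; right; exact ⟨rfl, ha1⟩
    have hwmem : ((a1,b2) : ℕ×ℕ) ∈ c.support := c.snd_mem_support_of_mem_edges hta
    have hbw_notin : s((p,b2),(a1,b2)) ∉ c.edges := by
      intro hmem
      refine no_four_cycle hc hlen (x := (p,q)) (a := (a1,q)) (b := (p,b2)) (w := (a1,b2))
        ?_ ?_ ?_ ?_ ?_ ?_ ha hta (by rwa [Sym2.eq_swap] at hmem) (by rwa [Sym2.eq_swap] at hb)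
      · intro hE; rw [Prod.mk.injEq] at hE; omega
      · intro hE; rw [Prod.mk.injEq] at hE; omega
      · intro hE; rw [Prod.mk.injEq] at hE; omega
      · exact hane
      · intro hE; rw [Prod.mk.injEq] at hE; omega
      · intro hE; rw [Prod.mk.injEq] at hE; omega
    exact ⟨(p,b2), (edgeShortcut c hconn' hw_adj hbmem hwmem hbw_notin).1, Or.inr hb⟩
  · -- t2 ≠ b2 : examine b's other neighbour u
    obtain ⟨u, hux, hub, hcompb⟩ := other_nbr c hc (show s((p,b2),(p,q)) ∈ c.edges by
      rwa [Sym2.eq_swap] at hb)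
    have hadju := c.adj_of_mem_edges hub
    obtain ⟨u1, u2⟩ := u
    rcases gnn_adj.1 hadju with ⟨hu1, hu2⟩ | ⟨hu1, hu2⟩
    · -- u vertical: b is straight vertical
      dsimp only at hu1 hu2
      refine ⟨(p,b2), ?_, Or.inr hb⟩
      refine straightV c hc hbmem (a := (p,q)) (b := (u1,u2)) ?_
        (by rwa [Sym2.eq_swap] at hb) hub rfl hu1.symm
      exact fun h => hux h.symm
    · -- u horizontal: u = (u1, b2)
      dsimp only at hu1 hu2
      rw [← hu1] at hub hux hcompb
      by_cases hua : u1 = a1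
      · -- shortcut edge from a to (a1,b2) = u
        rw [hua] at hub
        have hw_adj : GNN.Adj (a1,q) (a1,b2) := by
          rw [gnn_adj]; left; exact ⟨rfl, hb2⟩
        have hwmem : ((a1,b2) : ℕ×ℕ) ∈ c.support := c.snd_mem_support_of_mem_edges hub
        have haw_notin : s((a1,q),(a1,b2)) ∉ c.edges := by
          intro hmem
          rcases hcompa _ hmem with h | h
          · rw [Prod.mk.injEq] at h
            omega
          · rw [Prod.mk.injEq] at h
            exact htb h.2.symm
        exact ⟨(a1,q), (edgeShortcut c hconn' hw_adj hamem hwmem haw_notin).1, Or.inr ha⟩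
      · -- zigzag case
        have hhit : ∃ j, j ≠ q ∧ s((p,j),(a1,j)) ∈ c.edges ∧ (p,j) ∈ c.support := by
          rcases ha1 with h | h
          · subst h
            obtain ⟨j, hjq, hje⟩ := crossH c hnod (m := p) (j0 := q) ha
            exact ⟨j, hjq, hje, c.fst_mem_support_of_mem_edges hje⟩
          · obtain ⟨j, hjq, hje⟩ := crossH c hnod (m := a1) (j0 := q)
              (by rw [← h]; rwa [Sym2.eq_swap] at ha)
            rw [← h] at hje
            rw [Sym2.eq_swap] at hje
            exact ⟨j, hjq, hje, c.fst_mem_support_of_mem_edges hje⟩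
        obtain ⟨j, hjq, hje, hjmem⟩ := hhit
        have hjb2 : j ≠ b2 := by
          intro hj
          subst hj
          rcases hcompb _ hje with h | h
          · rw [Prod.mk.injEq] at h; omega
          · rw [Prod.mk.injEq] at h; omega
        rcases hb2 with hcb2 | hcb2
        · -- b above x : b2 = q + 1
          rcases Nat.lt_or_ge j q with hlt | hge
          · refine ⟨(p,q), vertAppDown c hconn' hx ⟨j, hlt, hjmem⟩ ?_, Or.inl rfl⟩
            intro j' hj' hmem
            rw [Sym2.eq_swap] at hmem
            rcases hcompx _ hmem with hh | hh
            · rw [Prod.mk.injEq] at hh; omega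
            · rw [Prod.mk.injEq] at hh; omega
          · refine ⟨(p,b2), vertAppUp c hconn' hbmem ⟨j, by omega, hjmem⟩ ?_, Or.inr hb⟩
            intro hmem
            rcases hcompb _ hmem with hh | hh
            · rw [Prod.mk.injEq] at hh; omega
            · rw [Prod.mk.injEq] at hh; omega
        · -- b below x : q = b2 + 1
          rcases Nat.lt_or_ge q j with hlt | hge
          · refine ⟨(p,q), vertAppUp c hconn' hx ⟨j, hlt, hjmem⟩ ?_, Or.inl rfl⟩
            intro hmem
            rcases hcompx _ hmem with hh | hh
            · rw [Prod.mk.injEq] at hh; omega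
            · rw [Prod.mk.injEq] at hh; omega
          · refine ⟨(p,b2), vertAppDown c hconn' hbmem ⟨j, by omega, hjmem⟩ ?_, Or.inr hb⟩
            intro j' hj' hmem
            rw [Sym2.eq_swap] at hmem
            rcases hcompb _ hmem with hh | hh
            · rw [Prod.mk.injEq] at hh; omega
            · rw [Prod.mk.injEq] at hh; omega

lemma master {z : ℕ×ℕ} (c : GNN.Walk z z) (hc : c.IsCycle) (hlen : 6 ≤ c.length)
    {x : ℕ×ℕ} (hx : x ∈ c.support) :
    ∃ v, ShortcutVertex one c v ∧ (v = x ∨ s(x,v) ∈ c.edges) := by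
  classical
  obtain ⟨p, q⟩ := x
  obtain ⟨a, b, hab, ha, hb, -⟩ := exists_two_nbrs c hc hx
  have hadja := c.adj_of_mem_edges ha
  have hadjb := c.adj_of_mem_edges hb
  obtain ⟨A1, A2⟩ := a
  obtain ⟨B1, B2⟩ := b
  rcases gnn_adj.1 hadja with ⟨ha1, ha2⟩ | ⟨ha1, ha2⟩ <;>
    rcases gnn_adj.1 hadjb with ⟨hb1, hb2⟩ | ⟨hb1, hb2⟩ <;>
      dsimp only at ha1 ha2 hb1 hb2
  · -- both vertical
    exact ⟨(p,q), straightV c hc hx hab ha hb ha1.symm hb1.symm, Or.inl rfl⟩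
  · -- a vertical, b horizontal
    rw [← ha1] at ha
    rw [← hb1] at hb
    exact cornerCase c hc hlen hx hb ha hb2 ha2
  · -- a horizontal, b vertical
    rw [← ha1] at ha
    rw [← hb1] at hb
    exact cornerCase c hc hlen hx ha hb ha2 hb2
  · -- both horizontal
    exact ⟨(p,q), straightH c hc hx hab ha hb ha1.symm hb1.symm, Or.inl rfl⟩

end Corner
/-- The Cartesian product graph `G = ℕ □ ℕ` with all edges of length
`1` is `2`-densely `6`-path-chordal; indeed, for every cycle `C` in `G` with `L(C) ≥ 6`
and every vertex `(p,q)` of `C`, either `(p,q)` is a shortcut vertex of `C` or some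
vertex of `C` adjacent to `(p,q)` is a shortcut vertex of `C`. -/
theorem natGrid_denselyKPathChordal :
    DenselyKPathChordal GNN (fun _ => (1 : ℝ)) 2 6 ∧
    ∀ (z : ℕ × ℕ) (c : GNN.Walk z z), c.IsCycle → 6 ≤ wlen (fun _ => (1 : ℝ)) c →
      ∀ v ∈ c.support, ShortcutVertex (fun _ => (1 : ℝ)) c v ∨
        ∃ w ∈ c.support, GNN.Adj v w ∧ ShortcutVertex (fun _ => (1 : ℝ)) c w := by
  have key : ∀ (z : ℕ × ℕ) (c : GNN.Walk z z), c.IsCycle → 6 ≤ wlen (fun _ => (1:ℝ)) c →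
      ∀ x ∈ c.support, ∃ v, ShortcutVertex (fun _ => (1:ℝ)) c v ∧
        (v = x ∨ s(x,v) ∈ c.edges) := by
    intro z c hc hwl x hx
    have hlen : 6 ≤ c.length := by
      rw [wlen_one] at hwl
      exact_mod_cast hwl
    exact master c hc hlen hx
  constructor
  · intro z c hc hwl x hx
    obtain ⟨v, hv, hvx⟩ := key z c hc hwl x hx
    refine ⟨v, hv, ?_⟩
    rcases hvx with rfl | hvx
    · have h0 : cdist (fun _ => (1:ℝ)) c v v ≤ ((Walk.nil : GNN.Walk v v).length : ℝ) := by
        refine cdist_le_of_walkIn c ⟨fun e he => ?_, fun a ha => ?_⟩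
        · simp at he
        · simp only [Walk.support_nil, List.mem_singleton] at ha
          subst ha
          exact hx
      simp only [Walk.length_nil, Nat.cast_zero] at h0
      linarith
    · have hadj : GNN.Adj x v := c.adj_of_mem_edges hvx
      have hvmem : v ∈ c.support := c.snd_mem_support_of_mem_edges hvx
      have hwin : WalkIn c (Walk.cons hadj.symm Walk.nil) := by
        refine ⟨fun e he => ?_, fun a ha => ?_⟩
        · simp only [Walk.edges_cons, Walk.edges_nil, List.mem_singleton] at he
          subst he
          rwa [Sym2.eq_swap]
        · simp only [Walk.support_cons, Walk.support_nil, List.mem_cons,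
            List.mem_singleton, List.not_mem_nil, or_false] at ha
          rcases ha with rfl | rfl
          · exact hvmem
          · exact hx
      have h1 := cdist_le_of_walkIn c hwin
      simp only [Walk.length_cons, Walk.length_nil, Nat.cast_one, zero_add, Nat.cast_ofNat,
        Nat.cast_succ, Nat.cast_zero] at h1
      linarith
  · intro z c hc hwl v hv
    obtain ⟨w, hw, hwv⟩ := key z c hc hwl v hv
    rcases hwv with rfl | hwv
    · exact Or.inl hw
    · exact Or.inr ⟨w, c.snd_mem_support_of_mem_edges hwv, c.adj_of_mem_edges hwv, hw⟩

end Chordality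
end
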